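/- The parity binomial edge ideal I(K₃) of the triangle K₃ does not admit a square-free initial ideal with respect to any monomial order on k[x₁,x₂,x₃,y₁,y₂,y₃], over any field k. -/

import Mathlib

open MvPolynomial

noncomputable section

/-- The parity binomial edge ideal `⟨x_i x_j - y_i y_j : {i,j} ∈ E(G)⟩`. -/
def pbei (k : Type*) [Field k] {V : Type*} (G : SimpleGraph V) :
    Ideal (MvPolynomial (V ⊕ V) k) :=
  Ideal.span {f | ∃ i j, G.Adj i j ∧
    f = X (Sum.inl i) * X (Sum.inl j) - X (Sum.inr i) * X (Sum.inr j)}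

/-- The multidegree (leading exponent) of a polynomial with respect to a
monomial order: the maximum of its support. -/
def mDeg {σ : Type*} (m : MonomialOrder σ) {k : Type*} [Field k]
    (f : MvPolynomial σ k) : σ →₀ ℕ :=
  m.toSyn.symm (f.support.sup fun d => m.toSyn d)

/-- The initial ideal of `I` with respect to a monomial order `m`. -/
def initialIdeal {σ : Type*} (m : MonomialOrder σ) {k : Type*} [Field k]
    (I : Ideal (MvPolynomial σ k)) : Ideal (MvPolynomial σ k) :=
  Ideal.span {g | ∃ f ∈ I, f ≠ 0 ∧ g = monomial (mDeg m f) (1 : k)}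

namespace PBaux

abbrev σ3 := Fin 3 ⊕ Fin 3

def xe (i : Fin 3) : σ3 →₀ ℕ := Finsupp.single (Sum.inl i) 1
def ye (i : Fin 3) : σ3 →₀ ℕ := Finsupp.single (Sum.inr i) 1

@[simp] lemma xe_inl (i j : Fin 3) : xe i (Sum.inl j) = if i = j then 1 else 0 := by
  simp [xe, Finsupp.single_apply]
@[simp] lemma xe_inr (i j : Fin 3) : xe i (Sum.inr j) = 0 := by
  simp [xe, Finsupp.single_apply]
@[simp] lemma ye_inl (i j : Fin 3) : ye i (Sum.inl j) = 0 := by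
  simp [ye, Finsupp.single_apply]
@[simp] lemma ye_inr (i j : Fin 3) : ye i (Sum.inr j) = if i = j then 1 else 0 := by
  simp [ye, Finsupp.single_apply]

lemma fin3_cover {i j l : Fin 3} (hij : i ≠ j) (hil : i ≠ l) (hjl : j ≠ l) (t : Fin 3) :
    t = i ∨ t = j ∨ t = l := by
  revert hij hil hjl; revert i j l t; decide

variable {k : Type*} [Field k] (m : MonomialOrder (Fin 3 ⊕ Fin 3))

/-! ### basic mDeg lemmas -/

lemma mDeg_mem_support {f : MvPolynomial σ3 k} (hf : f ≠ 0) : mDeg m f ∈ f.support := by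
  obtain ⟨b, hb, hsup⟩ := Finset.exists_mem_eq_sup f.support
    (Finset.nonempty_iff_ne_empty.mpr (mt MvPolynomial.support_eq_empty.mp hf)) (fun d => m.toSyn d)
  rw [mDeg, hsup]
  simpa using hb

lemma le_mDeg {f : MvPolynomial σ3 k} {d : σ3 →₀ ℕ} (hd : d ∈ f.support) :
    m.toSyn d ≤ m.toSyn (mDeg m f) := by
  rw [mDeg]
  simpa using Finset.le_sup (f := fun d => m.toSyn d) hd

/-! ### divisibility of pairs -/

lemma pair_le_iff {a b : σ3} (hab : a ≠ b) (e : σ3 →₀ ℕ) :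
    Finsupp.single a 1 + Finsupp.single b 1 ≤ e ↔ 1 ≤ e a ∧ 1 ≤ e b := by
  rw [Finsupp.le_def]
  constructor
  · intro h
    constructor
    · have := h a; simp [Finsupp.single_apply, hab.symm] at this; omega
    · have := h b; simp [Finsupp.single_apply, hab] at this; omega
  · rintro ⟨h1, h2⟩ s
    rcases eq_or_ne s a with rfl | ha
    · simpa [Finsupp.add_apply, Finsupp.single_apply, Ne.symm hab] using h1
    · rcases eq_or_ne s b with rfl | hb
      · simpa [Finsupp.add_apply, Finsupp.single_apply, hab] using h2
      · simp [Finsupp.add_apply, Finsupp.single_apply, Ne.symm ha, Ne.symm hb]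

lemma not_pair_le {a b : σ3} (hab : a ≠ b) {e : σ3 →₀ ℕ} (h : e a = 0 ∨ e b = 0) :
    ¬(Finsupp.single a 1 + Finsupp.single b 1 ≤ e) := by
  rw [pair_le_iff hab]; omega

lemma pair_le {a b : σ3} (hab : a ≠ b) {e : σ3 →₀ ℕ} (h1 : 1 ≤ e a) (h2 : 1 ≤ e b) :
    Finsupp.single a 1 + Finsupp.single b 1 ≤ e := (pair_le_iff hab e).mpr ⟨h1, h2⟩

/-! ### coefficient formula for multiples of generators -/

lemma coeff_mul_gen (g : MvPolynomial σ3 k) (p q : Fin 3) (e : σ3 →₀ ℕ) :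
    coeff e (g * (X (Sum.inl p) * X (Sum.inl q) - X (Sum.inr p) * X (Sum.inr q))) =
    (if xe p + xe q ≤ e then coeff (e - (xe p + xe q)) g else 0)
    - (if ye p + ye q ≤ e then coeff (e - (ye p + ye q)) g else 0) := by
  have h1 : (X (Sum.inl p) * X (Sum.inl q) : MvPolynomial σ3 k)
      = monomial (xe p + xe q) 1 := by
    rw [X, X, monomial_mul, mul_one]; rfl
  have h2 : (X (Sum.inr p) * X (Sum.inr q) : MvPolynomial σ3 k)
      = monomial (ye p + ye q) 1 := by
    rw [X, X, monomial_mul, mul_one]; rfl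
  rw [mul_sub, coeff_sub, h1, h2, coeff_mul_monomial', coeff_mul_monomial']
  simp [mul_one]


/-- Linear constraints satisfied by every element of the parity binomial edge
ideal of the triangle. -/
def Good (f : MvPolynomial σ3 k) : Prop :=
  coeff 0 f = 0 ∧
  (∀ s : σ3, coeff (Finsupp.single s 1) f = 0) ∧
  (∀ a b : Fin 3, coeff (xe a + ye b) f = 0) ∧
  (∀ a b : Fin 3, coeff (xe a + xe b) f + coeff (ye a + ye b) f = 0) ∧
  (∀ i j l : Fin 3, i ≠ j → i ≠ l → j ≠ l →
    coeff (xe i + xe j + xe l) f + coeff (xe i + ye j + ye l) f +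
    coeff (xe j + ye i + ye l) f + coeff (xe l + ye i + ye j) f = 0) ∧
  (∀ i j l : Fin 3, i ≠ j → i ≠ l → j ≠ l →
    coeff (ye i + ye j + ye l) f + coeff (ye i + xe j + xe l) f +
    coeff (ye j + xe i + xe l) f + coeff (ye l + xe i + xe j) f = 0)

lemma xpair_le {p q : Fin 3} (hpq : p ≠ q) {e : σ3 →₀ ℕ}
    (h1 : 1 ≤ e (Sum.inl p)) (h2 : 1 ≤ e (Sum.inl q)) : xe p + xe q ≤ e :=
  pair_le (by simp [hpq]) h1 h2

lemma not_xpair_le {p q : Fin 3} (hpq : p ≠ q) {e : σ3 →₀ ℕ}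
    (h : e (Sum.inl p) = 0 ∨ e (Sum.inl q) = 0) : ¬ xe p + xe q ≤ e :=
  not_pair_le (by simp [hpq]) h

lemma ypair_le {p q : Fin 3} (hpq : p ≠ q) {e : σ3 →₀ ℕ}
    (h1 : 1 ≤ e (Sum.inr p)) (h2 : 1 ≤ e (Sum.inr q)) : ye p + ye q ≤ e :=
  pair_le (by simp [hpq]) h1 h2

lemma not_ypair_le {p q : Fin 3} (hpq : p ≠ q) {e : σ3 →₀ ℕ}
    (h : e (Sum.inr p) = 0 ∨ e (Sum.inr q) = 0) : ¬ ye p + ye q ≤ e :=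
  not_pair_le (by simp [hpq]) h

lemma xpair_le_xpair_iff {p q a b : Fin 3} (hpq : p ≠ q) :
    xe p + xe q ≤ xe a + xe b ↔ (a = p ∧ b = q) ∨ (a = q ∧ b = p) := by
  constructor
  · intro h
    obtain ⟨h1, h2⟩ :=
      (pair_le_iff (show (Sum.inl p : σ3) ≠ Sum.inl q by simp [hpq]) _).mp h
    simp only [Finsupp.add_apply, xe_inl] at h1 h2
    have hp : a = p ∨ b = p := by by_contra hcon; push_neg at hcon; simp [hcon.1, hcon.2] at h1
    have hq : a = q ∨ b = q := by by_contra hcon; push_neg at hcon; simp [hcon.1, hcon.2] at h2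
    rcases hp with h3 | h3 <;> rcases hq with h4 | h4
    · exact absurd (h3.symm.trans h4) hpq
    · exact Or.inl ⟨h3, h4⟩
    · exact Or.inr ⟨h4, h3⟩
    · exact absurd (h3.symm.trans h4) hpq
  · rintro (⟨rfl, rfl⟩ | ⟨rfl, rfl⟩)
    · exact le_rfl
    · exact le_of_eq (add_comm _ _)

lemma ypair_le_ypair_iff {p q a b : Fin 3} (hpq : p ≠ q) :
    ye p + ye q ≤ ye a + ye b ↔ (a = p ∧ b = q) ∨ (a = q ∧ b = p) := by
  constructor
  · intro h
    obtain ⟨h1, h2⟩ :=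
      (pair_le_iff (show (Sum.inr p : σ3) ≠ Sum.inr q by simp [hpq]) _).mp h
    simp only [Finsupp.add_apply, ye_inr] at h1 h2
    have hp : a = p ∨ b = p := by by_contra hcon; push_neg at hcon; simp [hcon.1, hcon.2] at h1
    have hq : a = q ∨ b = q := by by_contra hcon; push_neg at hcon; simp [hcon.1, hcon.2] at h2
    rcases hp with h3 | h3 <;> rcases hq with h4 | h4
    · exact absurd (h3.symm.trans h4) hpq
    · exact Or.inl ⟨h3, h4⟩
    · exact Or.inr ⟨h4, h3⟩
    · exact absurd (h3.symm.trans h4) hpq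
  · rintro (⟨rfl, rfl⟩ | ⟨rfl, rfl⟩)
    · exact le_rfl
    · exact le_of_eq (add_comm _ _)

lemma good_mul_gen (g : MvPolynomial σ3 k) (p q : Fin 3) (hpq : p ≠ q) :
    Good (g * (X (Sum.inl p) * X (Sum.inl q) - X (Sum.inr p) * X (Sum.inr q))) := by
  refine ⟨?_, ?_, ?_, ?_, ?_, ?_⟩
  · rw [coeff_mul_gen, if_neg (not_xpair_le hpq (Or.inl (by simp))),
      if_neg (not_ypair_le hpq (Or.inl (by simp)))]
    ring
  · intro s
    rw [coeff_mul_gen]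
    have hx : ¬ (xe p + xe q ≤ Finsupp.single s 1) := by
      rcases eq_or_ne s (Sum.inl p) with heq | hne
      · exact not_xpair_le hpq (Or.inr (by simp [heq, Finsupp.single_apply, hpq]))
      · exact not_xpair_le hpq (Or.inl (by simp [Finsupp.single_apply, hne]))
    have hy : ¬ (ye p + ye q ≤ Finsupp.single s 1) := by
      rcases eq_or_ne s (Sum.inr p) with heq | hne
      · exact not_ypair_le hpq (Or.inr (by simp [heq, Finsupp.single_apply, hpq]))
      · exact not_ypair_le hpq (Or.inl (by simp [Finsupp.single_apply, hne]))
    rw [if_neg hx, if_neg hy]; ring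
  · intro a b
    rw [coeff_mul_gen]
    have hx : ¬ (xe p + xe q ≤ xe a + ye b) := by
      rcases eq_or_ne a p with heq | hne
      · refine not_xpair_le hpq (Or.inr ?_)
        simp [Finsupp.add_apply, heq, hpq]
      · refine not_xpair_le hpq (Or.inl ?_)
        simp [Finsupp.add_apply, hne]
    have hy : ¬ (ye p + ye q ≤ xe a + ye b) := by
      rcases eq_or_ne b p with heq | hne
      · refine not_ypair_le hpq (Or.inr ?_)
        simp [Finsupp.add_apply, heq, hpq]
      · refine not_ypair_le hpq (Or.inl ?_)
        simp [Finsupp.add_apply, hne]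
    rw [if_neg hx, if_neg hy]; ring
  · intro a b
    rw [coeff_mul_gen, coeff_mul_gen]
    have h1 : ¬ (ye p + ye q ≤ xe a + xe b) := not_ypair_le hpq (Or.inl (by simp [Finsupp.add_apply]))
    have h2 : ¬ (xe p + xe q ≤ ye a + ye b) := not_xpair_le hpq (Or.inl (by simp [Finsupp.add_apply]))
    rw [if_neg h1, if_neg h2]
    by_cases hc : (a = p ∧ b = q) ∨ (a = q ∧ b = p)
    · have hcx := (xpair_le_xpair_iff hpq).mpr hc
      have hcy := (ypair_le_ypair_iff hpq).mpr hc
      rw [if_pos hcx, if_pos hcy]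
      rcases hc with ⟨h3, h4⟩ | ⟨h3, h4⟩
      · rw [h3, h4, tsub_self, tsub_self]; ring
      · rw [h3, h4, add_comm (xe q) (xe p), add_comm (ye q) (ye p), tsub_self, tsub_self]; ring
    · rw [if_neg (fun h => hc ((xpair_le_xpair_iff hpq).mp h)),
        if_neg (fun h => hc ((ypair_le_ypair_iff hpq).mp h))]
      ring
  · intro i j l hij hil hjl
    rcases fin3_cover hij hil hjl p with hp | hp | hp <;>
        rcases fin3_cover hij hil hjl q with hq | hq | hq
    · exact absurd (hp.trans hq.symm) hpq
    · rw [hp, hq]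
      have E1x : xe i + xe j ≤ xe i + xe j + xe l := xpair_le (hij) (by simp [Finsupp.add_apply, hij, hil, hjl, Ne.symm hij, Ne.symm hil, Ne.symm hjl]) (by simp [Finsupp.add_apply, hij, hil, hjl, Ne.symm hij, Ne.symm hil, Ne.symm hjl])
      have E1y : ¬ ye i + ye j ≤ xe i + xe j + xe l := not_ypair_le (hij) (Or.inl (by simp [Finsupp.add_apply, hij, hil, hjl, Ne.symm hij, Ne.symm hil, Ne.symm hjl]))
      have E2x : ¬ xe i + xe j ≤ xe i + ye j + ye l := not_xpair_le (hij) (Or.inr (by simp [Finsupp.add_apply, hij, hil, hjl, Ne.symm hij, Ne.symm hil, Ne.symm hjl]))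
      have E2y : ¬ ye i + ye j ≤ xe i + ye j + ye l := not_ypair_le (hij) (Or.inl (by simp [Finsupp.add_apply, hij, hil, hjl, Ne.symm hij, Ne.symm hil, Ne.symm hjl]))
      have E3x : ¬ xe i + xe j ≤ xe j + ye i + ye l := not_xpair_le (hij) (Or.inl (by simp [Finsupp.add_apply, hij, hil, hjl, Ne.symm hij, Ne.symm hil, Ne.symm hjl]))
      have E3y : ¬ ye i + ye j ≤ xe j + ye i + ye l := not_ypair_le (hij) (Or.inr (by simp [Finsupp.add_apply, hij, hil, hjl, Ne.symm hij, Ne.symm hil, Ne.symm hjl]))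
      have E4x : ¬ xe i + xe j ≤ xe l + ye i + ye j := not_xpair_le (hij) (Or.inl (by simp [Finsupp.add_apply, hij, hil, hjl, Ne.symm hij, Ne.symm hil, Ne.symm hjl]))
      have E4y : ye i + ye j ≤ xe l + ye i + ye j := ypair_le (hij) (by simp [Finsupp.add_apply, hij, hil, hjl, Ne.symm hij, Ne.symm hil, Ne.symm hjl]) (by simp [Finsupp.add_apply, hij, hil, hjl, Ne.symm hij, Ne.symm hil, Ne.symm hjl])
      rw [coeff_mul_gen, coeff_mul_gen, coeff_mul_gen, coeff_mul_gen, if_pos E1x, if_neg E1y, if_neg E2x, if_neg E2y, if_neg E3x, if_neg E3y, if_neg E4x, if_pos E4y]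
      have ts1 : xe i + xe j + xe l - (xe i + xe j) = xe l := by
          rw [show xe i + xe j + xe l = (xe i + xe j) + xe l by abel]; exact add_tsub_cancel_left _ _
      have ts2 : xe l + ye i + ye j - (ye i + ye j) = xe l := by
          rw [show xe l + ye i + ye j = (ye i + ye j) + xe l by abel]; exact add_tsub_cancel_left _ _
      rw [ts1, ts2]; ring
    · rw [hp, hq]
      have E1x : xe i + xe l ≤ xe i + xe j + xe l := xpair_le (hil) (by simp [Finsupp.add_apply, hij, hil, hjl, Ne.symm hij, Ne.symm hil, Ne.symm hjl]) (by simp [Finsupp.add_apply, hij, hil, hjl, Ne.symm hij, Ne.symm hil, Ne.symm hjl])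
      have E1y : ¬ ye i + ye l ≤ xe i + xe j + xe l := not_ypair_le (hil) (Or.inl (by simp [Finsupp.add_apply, hij, hil, hjl, Ne.symm hij, Ne.symm hil, Ne.symm hjl]))
      have E2x : ¬ xe i + xe l ≤ xe i + ye j + ye l := not_xpair_le (hil) (Or.inr (by simp [Finsupp.add_apply, hij, hil, hjl, Ne.symm hij, Ne.symm hil, Ne.symm hjl]))
      have E2y : ¬ ye i + ye l ≤ xe i + ye j + ye l := not_ypair_le (hil) (Or.inl (by simp [Finsupp.add_apply, hij, hil, hjl, Ne.symm hij, Ne.symm hil, Ne.symm hjl]))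
      have E3x : ¬ xe i + xe l ≤ xe j + ye i + ye l := not_xpair_le (hil) (Or.inl (by simp [Finsupp.add_apply, hij, hil, hjl, Ne.symm hij, Ne.symm hil, Ne.symm hjl]))
      have E3y : ye i + ye l ≤ xe j + ye i + ye l := ypair_le (hil) (by simp [Finsupp.add_apply, hij, hil, hjl, Ne.symm hij, Ne.symm hil, Ne.symm hjl]) (by simp [Finsupp.add_apply, hij, hil, hjl, Ne.symm hij, Ne.symm hil, Ne.symm hjl])
      have E4x : ¬ xe i + xe l ≤ xe l + ye i + ye j := not_xpair_le (hil) (Or.inl (by simp [Finsupp.add_apply, hij, hil, hjl, Ne.symm hij, Ne.symm hil, Ne.symm hjl]))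
      have E4y : ¬ ye i + ye l ≤ xe l + ye i + ye j := not_ypair_le (hil) (Or.inr (by simp [Finsupp.add_apply, hij, hil, hjl, Ne.symm hij, Ne.symm hil, Ne.symm hjl]))
      rw [coeff_mul_gen, coeff_mul_gen, coeff_mul_gen, coeff_mul_gen, if_pos E1x, if_neg E1y, if_neg E2x, if_neg E2y, if_neg E3x, if_pos E3y, if_neg E4x, if_neg E4y]
      have ts1 : xe i + xe j + xe l - (xe i + xe l) = xe j := by
          rw [show xe i + xe j + xe l = (xe i + xe l) + xe j by abel]; exact add_tsub_cancel_left _ _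
      have ts2 : xe j + ye i + ye l - (ye i + ye l) = xe j := by
          rw [show xe j + ye i + ye l = (ye i + ye l) + xe j by abel]; exact add_tsub_cancel_left _ _
      rw [ts1, ts2]; ring
    · rw [hp, hq]
      have E1x : xe j + xe i ≤ xe i + xe j + xe l := xpair_le (Ne.symm hij) (by simp [Finsupp.add_apply, hij, hil, hjl, Ne.symm hij, Ne.symm hil, Ne.symm hjl]) (by simp [Finsupp.add_apply, hij, hil, hjl, Ne.symm hij, Ne.symm hil, Ne.symm hjl])
      have E1y : ¬ ye j + ye i ≤ xe i + xe j + xe l := not_ypair_le (Ne.symm hij) (Or.inl (by simp [Finsupp.add_apply, hij, hil, hjl, Ne.symm hij, Ne.symm hil, Ne.symm hjl]))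
      have E2x : ¬ xe j + xe i ≤ xe i + ye j + ye l := not_xpair_le (Ne.symm hij) (Or.inl (by simp [Finsupp.add_apply, hij, hil, hjl, Ne.symm hij, Ne.symm hil, Ne.symm hjl]))
      have E2y : ¬ ye j + ye i ≤ xe i + ye j + ye l := not_ypair_le (Ne.symm hij) (Or.inr (by simp [Finsupp.add_apply, hij, hil, hjl, Ne.symm hij, Ne.symm hil, Ne.symm hjl]))
      have E3x : ¬ xe j + xe i ≤ xe j + ye i + ye l := not_xpair_le (Ne.symm hij) (Or.inr (by simp [Finsupp.add_apply, hij, hil, hjl, Ne.symm hij, Ne.symm hil, Ne.symm hjl]))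
      have E3y : ¬ ye j + ye i ≤ xe j + ye i + ye l := not_ypair_le (Ne.symm hij) (Or.inl (by simp [Finsupp.add_apply, hij, hil, hjl, Ne.symm hij, Ne.symm hil, Ne.symm hjl]))
      have E4x : ¬ xe j + xe i ≤ xe l + ye i + ye j := not_xpair_le (Ne.symm hij) (Or.inl (by simp [Finsupp.add_apply, hij, hil, hjl, Ne.symm hij, Ne.symm hil, Ne.symm hjl]))
      have E4y : ye j + ye i ≤ xe l + ye i + ye j := ypair_le (Ne.symm hij) (by simp [Finsupp.add_apply, hij, hil, hjl, Ne.symm hij, Ne.symm hil, Ne.symm hjl]) (by simp [Finsupp.add_apply, hij, hil, hjl, Ne.symm hij, Ne.symm hil, Ne.symm hjl])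
      rw [coeff_mul_gen, coeff_mul_gen, coeff_mul_gen, coeff_mul_gen, if_pos E1x, if_neg E1y, if_neg E2x, if_neg E2y, if_neg E3x, if_neg E3y, if_neg E4x, if_pos E4y]
      have ts1 : xe i + xe j + xe l - (xe j + xe i) = xe l := by
          rw [show xe i + xe j + xe l = (xe j + xe i) + xe l by abel]; exact add_tsub_cancel_left _ _
      have ts2 : xe l + ye i + ye j - (ye j + ye i) = xe l := by
          rw [show xe l + ye i + ye j = (ye j + ye i) + xe l by abel]; exact add_tsub_cancel_left _ _
      rw [ts1, ts2]; ring
    · exact absurd (hp.trans hq.symm) hpq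
    · rw [hp, hq]
      have E1x : xe j + xe l ≤ xe i + xe j + xe l := xpair_le (hjl) (by simp [Finsupp.add_apply, hij, hil, hjl, Ne.symm hij, Ne.symm hil, Ne.symm hjl]) (by simp [Finsupp.add_apply, hij, hil, hjl, Ne.symm hij, Ne.symm hil, Ne.symm hjl])
      have E1y : ¬ ye j + ye l ≤ xe i + xe j + xe l := not_ypair_le (hjl) (Or.inl (by simp [Finsupp.add_apply, hij, hil, hjl, Ne.symm hij, Ne.symm hil, Ne.symm hjl]))
      have E2x : ¬ xe j + xe l ≤ xe i + ye j + ye l := not_xpair_le (hjl) (Or.inl (by simp [Finsupp.add_apply, hij, hil, hjl, Ne.symm hij, Ne.symm hil, Ne.symm hjl]))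
      have E2y : ye j + ye l ≤ xe i + ye j + ye l := ypair_le (hjl) (by simp [Finsupp.add_apply, hij, hil, hjl, Ne.symm hij, Ne.symm hil, Ne.symm hjl]) (by simp [Finsupp.add_apply, hij, hil, hjl, Ne.symm hij, Ne.symm hil, Ne.symm hjl])
      have E3x : ¬ xe j + xe l ≤ xe j + ye i + ye l := not_xpair_le (hjl) (Or.inr (by simp [Finsupp.add_apply, hij, hil, hjl, Ne.symm hij, Ne.symm hil, Ne.symm hjl]))
      have E3y : ¬ ye j + ye l ≤ xe j + ye i + ye l := not_ypair_le (hjl) (Or.inl (by simp [Finsupp.add_apply, hij, hil, hjl, Ne.symm hij, Ne.symm hil, Ne.symm hjl]))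
      have E4x : ¬ xe j + xe l ≤ xe l + ye i + ye j := not_xpair_le (hjl) (Or.inl (by simp [Finsupp.add_apply, hij, hil, hjl, Ne.symm hij, Ne.symm hil, Ne.symm hjl]))
      have E4y : ¬ ye j + ye l ≤ xe l + ye i + ye j := not_ypair_le (hjl) (Or.inr (by simp [Finsupp.add_apply, hij, hil, hjl, Ne.symm hij, Ne.symm hil, Ne.symm hjl]))
      rw [coeff_mul_gen, coeff_mul_gen, coeff_mul_gen, coeff_mul_gen, if_pos E1x, if_neg E1y, if_neg E2x, if_pos E2y, if_neg E3x, if_neg E3y, if_neg E4x, if_neg E4y]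
      have ts1 : xe i + xe j + xe l - (xe j + xe l) = xe i := by
          rw [show xe i + xe j + xe l = (xe j + xe l) + xe i by abel]; exact add_tsub_cancel_left _ _
      have ts2 : xe i + ye j + ye l - (ye j + ye l) = xe i := by
          rw [show xe i + ye j + ye l = (ye j + ye l) + xe i by abel]; exact add_tsub_cancel_left _ _
      rw [ts1, ts2]; ring
    · rw [hp, hq]
      have E1x : xe l + xe i ≤ xe i + xe j + xe l := xpair_le (Ne.symm hil) (by simp [Finsupp.add_apply, hij, hil, hjl, Ne.symm hij, Ne.symm hil, Ne.symm hjl]) (by simp [Finsupp.add_apply, hij, hil, hjl, Ne.symm hij, Ne.symm hil, Ne.symm hjl])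
      have E1y : ¬ ye l + ye i ≤ xe i + xe j + xe l := not_ypair_le (Ne.symm hil) (Or.inl (by simp [Finsupp.add_apply, hij, hil, hjl, Ne.symm hij, Ne.symm hil, Ne.symm hjl]))
      have E2x : ¬ xe l + xe i ≤ xe i + ye j + ye l := not_xpair_le (Ne.symm hil) (Or.inl (by simp [Finsupp.add_apply, hij, hil, hjl, Ne.symm hij, Ne.symm hil, Ne.symm hjl]))
      have E2y : ¬ ye l + ye i ≤ xe i + ye j + ye l := not_ypair_le (Ne.symm hil) (Or.inr (by simp [Finsupp.add_apply, hij, hil, hjl, Ne.symm hij, Ne.symm hil, Ne.symm hjl]))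
      have E3x : ¬ xe l + xe i ≤ xe j + ye i + ye l := not_xpair_le (Ne.symm hil) (Or.inl (by simp [Finsupp.add_apply, hij, hil, hjl, Ne.symm hij, Ne.symm hil, Ne.symm hjl]))
      have E3y : ye l + ye i ≤ xe j + ye i + ye l := ypair_le (Ne.symm hil) (by simp [Finsupp.add_apply, hij, hil, hjl, Ne.symm hij, Ne.symm hil, Ne.symm hjl]) (by simp [Finsupp.add_apply, hij, hil, hjl, Ne.symm hij, Ne.symm hil, Ne.symm hjl])
      have E4x : ¬ xe l + xe i ≤ xe l + ye i + ye j := not_xpair_le (Ne.symm hil) (Or.inr (by simp [Finsupp.add_apply, hij, hil, hjl, Ne.symm hij, Ne.symm hil, Ne.symm hjl]))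
      have E4y : ¬ ye l + ye i ≤ xe l + ye i + ye j := not_ypair_le (Ne.symm hil) (Or.inl (by simp [Finsupp.add_apply, hij, hil, hjl, Ne.symm hij, Ne.symm hil, Ne.symm hjl]))
      rw [coeff_mul_gen, coeff_mul_gen, coeff_mul_gen, coeff_mul_gen, if_pos E1x, if_neg E1y, if_neg E2x, if_neg E2y, if_neg E3x, if_pos E3y, if_neg E4x, if_neg E4y]
      have ts1 : xe i + xe j + xe l - (xe l + xe i) = xe j := by
          rw [show xe i + xe j + xe l = (xe l + xe i) + xe j by abel]; exact add_tsub_cancel_left _ _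
      have ts2 : xe j + ye i + ye l - (ye l + ye i) = xe j := by
          rw [show xe j + ye i + ye l = (ye l + ye i) + xe j by abel]; exact add_tsub_cancel_left _ _
      rw [ts1, ts2]; ring
    · rw [hp, hq]
      have E1x : xe l + xe j ≤ xe i + xe j + xe l := xpair_le (Ne.symm hjl) (by simp [Finsupp.add_apply, hij, hil, hjl, Ne.symm hij, Ne.symm hil, Ne.symm hjl]) (by simp [Finsupp.add_apply, hij, hil, hjl, Ne.symm hij, Ne.symm hil, Ne.symm hjl])
      have E1y : ¬ ye l + ye j ≤ xe i + xe j + xe l := not_ypair_le (Ne.symm hjl) (Or.inl (by simp [Finsupp.add_apply, hij, hil, hjl, Ne.symm hij, Ne.symm hil, Ne.symm hjl]))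
      have E2x : ¬ xe l + xe j ≤ xe i + ye j + ye l := not_xpair_le (Ne.symm hjl) (Or.inl (by simp [Finsupp.add_apply, hij, hil, hjl, Ne.symm hij, Ne.symm hil, Ne.symm hjl]))
      have E2y : ye l + ye j ≤ xe i + ye j + ye l := ypair_le (Ne.symm hjl) (by simp [Finsupp.add_apply, hij, hil, hjl, Ne.symm hij, Ne.symm hil, Ne.symm hjl]) (by simp [Finsupp.add_apply, hij, hil, hjl, Ne.symm hij, Ne.symm hil, Ne.symm hjl])
      have E3x : ¬ xe l + xe j ≤ xe j + ye i + ye l := not_xpair_le (Ne.symm hjl) (Or.inl (by simp [Finsupp.add_apply, hij, hil, hjl, Ne.symm hij, Ne.symm hil, Ne.symm hjl]))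
      have E3y : ¬ ye l + ye j ≤ xe j + ye i + ye l := not_ypair_le (Ne.symm hjl) (Or.inr (by simp [Finsupp.add_apply, hij, hil, hjl, Ne.symm hij, Ne.symm hil, Ne.symm hjl]))
      have E4x : ¬ xe l + xe j ≤ xe l + ye i + ye j := not_xpair_le (Ne.symm hjl) (Or.inr (by simp [Finsupp.add_apply, hij, hil, hjl, Ne.symm hij, Ne.symm hil, Ne.symm hjl]))
      have E4y : ¬ ye l + ye j ≤ xe l + ye i + ye j := not_ypair_le (Ne.symm hjl) (Or.inl (by simp [Finsupp.add_apply, hij, hil, hjl, Ne.symm hij, Ne.symm hil, Ne.symm hjl]))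
      rw [coeff_mul_gen, coeff_mul_gen, coeff_mul_gen, coeff_mul_gen, if_pos E1x, if_neg E1y, if_neg E2x, if_pos E2y, if_neg E3x, if_neg E3y, if_neg E4x, if_neg E4y]
      have ts1 : xe i + xe j + xe l - (xe l + xe j) = xe i := by
          rw [show xe i + xe j + xe l = (xe l + xe j) + xe i by abel]; exact add_tsub_cancel_left _ _
      have ts2 : xe i + ye j + ye l - (ye l + ye j) = xe i := by
          rw [show xe i + ye j + ye l = (ye l + ye j) + xe i by abel]; exact add_tsub_cancel_left _ _
      rw [ts1, ts2]; ring
    · exact absurd (hp.trans hq.symm) hpq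
  · intro i j l hij hil hjl
    rcases fin3_cover hij hil hjl p with hp | hp | hp <;>
        rcases fin3_cover hij hil hjl q with hq | hq | hq
    · exact absurd (hp.trans hq.symm) hpq
    · rw [hp, hq]
      have F1x : ¬ xe i + xe j ≤ ye i + ye j + ye l := not_xpair_le (hij) (Or.inl (by simp [Finsupp.add_apply, hij, hil, hjl, Ne.symm hij, Ne.symm hil, Ne.symm hjl]))
      have F1y : ye i + ye j ≤ ye i + ye j + ye l := ypair_le (hij) (by simp [Finsupp.add_apply, hij, hil, hjl, Ne.symm hij, Ne.symm hil, Ne.symm hjl]) (by simp [Finsupp.add_apply, hij, hil, hjl, Ne.symm hij, Ne.symm hil, Ne.symm hjl])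
      have F2x : ¬ xe i + xe j ≤ ye i + xe j + xe l := not_xpair_le (hij) (Or.inl (by simp [Finsupp.add_apply, hij, hil, hjl, Ne.symm hij, Ne.symm hil, Ne.symm hjl]))
      have F2y : ¬ ye i + ye j ≤ ye i + xe j + xe l := not_ypair_le (hij) (Or.inr (by simp [Finsupp.add_apply, hij, hil, hjl, Ne.symm hij, Ne.symm hil, Ne.symm hjl]))
      have F3x : ¬ xe i + xe j ≤ ye j + xe i + xe l := not_xpair_le (hij) (Or.inr (by simp [Finsupp.add_apply, hij, hil, hjl, Ne.symm hij, Ne.symm hil, Ne.symm hjl]))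
      have F3y : ¬ ye i + ye j ≤ ye j + xe i + xe l := not_ypair_le (hij) (Or.inl (by simp [Finsupp.add_apply, hij, hil, hjl, Ne.symm hij, Ne.symm hil, Ne.symm hjl]))
      have F4x : xe i + xe j ≤ ye l + xe i + xe j := xpair_le (hij) (by simp [Finsupp.add_apply, hij, hil, hjl, Ne.symm hij, Ne.symm hil, Ne.symm hjl]) (by simp [Finsupp.add_apply, hij, hil, hjl, Ne.symm hij, Ne.symm hil, Ne.symm hjl])
      have F4y : ¬ ye i + ye j ≤ ye l + xe i + xe j := not_ypair_le (hij) (Or.inl (by simp [Finsupp.add_apply, hij, hil, hjl, Ne.symm hij, Ne.symm hil, Ne.symm hjl]))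
      rw [coeff_mul_gen, coeff_mul_gen, coeff_mul_gen, coeff_mul_gen, if_neg F1x, if_pos F1y, if_neg F2x, if_neg F2y, if_neg F3x, if_neg F3y, if_pos F4x, if_neg F4y]
      have ts1 : ye i + ye j + ye l - (ye i + ye j) = ye l := by
          rw [show ye i + ye j + ye l = (ye i + ye j) + ye l by abel]; exact add_tsub_cancel_left _ _
      have ts2 : ye l + xe i + xe j - (xe i + xe j) = ye l := by
          rw [show ye l + xe i + xe j = (xe i + xe j) + ye l by abel]; exact add_tsub_cancel_left _ _
      rw [ts1, ts2]; ring
    · rw [hp, hq]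
      have F1x : ¬ xe i + xe l ≤ ye i + ye j + ye l := not_xpair_le (hil) (Or.inl (by simp [Finsupp.add_apply, hij, hil, hjl, Ne.symm hij, Ne.symm hil, Ne.symm hjl]))
      have F1y : ye i + ye l ≤ ye i + ye j + ye l := ypair_le (hil) (by simp [Finsupp.add_apply, hij, hil, hjl, Ne.symm hij, Ne.symm hil, Ne.symm hjl]) (by simp [Finsupp.add_apply, hij, hil, hjl, Ne.symm hij, Ne.symm hil, Ne.symm hjl])
      have F2x : ¬ xe i + xe l ≤ ye i + xe j + xe l := not_xpair_le (hil) (Or.inl (by simp [Finsupp.add_apply, hij, hil, hjl, Ne.symm hij, Ne.symm hil, Ne.symm hjl]))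
      have F2y : ¬ ye i + ye l ≤ ye i + xe j + xe l := not_ypair_le (hil) (Or.inr (by simp [Finsupp.add_apply, hij, hil, hjl, Ne.symm hij, Ne.symm hil, Ne.symm hjl]))
      have F3x : xe i + xe l ≤ ye j + xe i + xe l := xpair_le (hil) (by simp [Finsupp.add_apply, hij, hil, hjl, Ne.symm hij, Ne.symm hil, Ne.symm hjl]) (by simp [Finsupp.add_apply, hij, hil, hjl, Ne.symm hij, Ne.symm hil, Ne.symm hjl])
      have F3y : ¬ ye i + ye l ≤ ye j + xe i + xe l := not_ypair_le (hil) (Or.inl (by simp [Finsupp.add_apply, hij, hil, hjl, Ne.symm hij, Ne.symm hil, Ne.symm hjl]))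
      have F4x : ¬ xe i + xe l ≤ ye l + xe i + xe j := not_xpair_le (hil) (Or.inr (by simp [Finsupp.add_apply, hij, hil, hjl, Ne.symm hij, Ne.symm hil, Ne.symm hjl]))
      have F4y : ¬ ye i + ye l ≤ ye l + xe i + xe j := not_ypair_le (hil) (Or.inl (by simp [Finsupp.add_apply, hij, hil, hjl, Ne.symm hij, Ne.symm hil, Ne.symm hjl]))
      rw [coeff_mul_gen, coeff_mul_gen, coeff_mul_gen, coeff_mul_gen, if_neg F1x, if_pos F1y, if_neg F2x, if_neg F2y, if_pos F3x, if_neg F3y, if_neg F4x, if_neg F4y]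
      have ts1 : ye i + ye j + ye l - (ye i + ye l) = ye j := by
          rw [show ye i + ye j + ye l = (ye i + ye l) + ye j by abel]; exact add_tsub_cancel_left _ _
      have ts2 : ye j + xe i + xe l - (xe i + xe l) = ye j := by
          rw [show ye j + xe i + xe l = (xe i + xe l) + ye j by abel]; exact add_tsub_cancel_left _ _
      rw [ts1, ts2]; ring
    · rw [hp, hq]
      have F1x : ¬ xe j + xe i ≤ ye i + ye j + ye l := not_xpair_le (Ne.symm hij) (Or.inl (by simp [Finsupp.add_apply, hij, hil, hjl, Ne.symm hij, Ne.symm hil, Ne.symm hjl]))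
      have F1y : ye j + ye i ≤ ye i + ye j + ye l := ypair_le (Ne.symm hij) (by simp [Finsupp.add_apply, hij, hil, hjl, Ne.symm hij, Ne.symm hil, Ne.symm hjl]) (by simp [Finsupp.add_apply, hij, hil, hjl, Ne.symm hij, Ne.symm hil, Ne.symm hjl])
      have F2x : ¬ xe j + xe i ≤ ye i + xe j + xe l := not_xpair_le (Ne.symm hij) (Or.inr (by simp [Finsupp.add_apply, hij, hil, hjl, Ne.symm hij, Ne.symm hil, Ne.symm hjl]))
      have F2y : ¬ ye j + ye i ≤ ye i + xe j + xe l := not_ypair_le (Ne.symm hij) (Or.inl (by simp [Finsupp.add_apply, hij, hil, hjl, Ne.symm hij, Ne.symm hil, Ne.symm hjl]))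
      have F3x : ¬ xe j + xe i ≤ ye j + xe i + xe l := not_xpair_le (Ne.symm hij) (Or.inl (by simp [Finsupp.add_apply, hij, hil, hjl, Ne.symm hij, Ne.symm hil, Ne.symm hjl]))
      have F3y : ¬ ye j + ye i ≤ ye j + xe i + xe l := not_ypair_le (Ne.symm hij) (Or.inr (by simp [Finsupp.add_apply, hij, hil, hjl, Ne.symm hij, Ne.symm hil, Ne.symm hjl]))
      have F4x : xe j + xe i ≤ ye l + xe i + xe j := xpair_le (Ne.symm hij) (by simp [Finsupp.add_apply, hij, hil, hjl, Ne.symm hij, Ne.symm hil, Ne.symm hjl]) (by simp [Finsupp.add_apply, hij, hil, hjl, Ne.symm hij, Ne.symm hil, Ne.symm hjl])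
      have F4y : ¬ ye j + ye i ≤ ye l + xe i + xe j := not_ypair_le (Ne.symm hij) (Or.inl (by simp [Finsupp.add_apply, hij, hil, hjl, Ne.symm hij, Ne.symm hil, Ne.symm hjl]))
      rw [coeff_mul_gen, coeff_mul_gen, coeff_mul_gen, coeff_mul_gen, if_neg F1x, if_pos F1y, if_neg F2x, if_neg F2y, if_neg F3x, if_neg F3y, if_pos F4x, if_neg F4y]
      have ts1 : ye i + ye j + ye l - (ye j + ye i) = ye l := by
          rw [show ye i + ye j + ye l = (ye j + ye i) + ye l by abel]; exact add_tsub_cancel_left _ _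
      have ts2 : ye l + xe i + xe j - (xe j + xe i) = ye l := by
          rw [show ye l + xe i + xe j = (xe j + xe i) + ye l by abel]; exact add_tsub_cancel_left _ _
      rw [ts1, ts2]; ring
    · exact absurd (hp.trans hq.symm) hpq
    · rw [hp, hq]
      have F1x : ¬ xe j + xe l ≤ ye i + ye j + ye l := not_xpair_le (hjl) (Or.inl (by simp [Finsupp.add_apply, hij, hil, hjl, Ne.symm hij, Ne.symm hil, Ne.symm hjl]))
      have F1y : ye j + ye l ≤ ye i + ye j + ye l := ypair_le (hjl) (by simp [Finsupp.add_apply, hij, hil, hjl, Ne.symm hij, Ne.symm hil, Ne.symm hjl]) (by simp [Finsupp.add_apply, hij, hil, hjl, Ne.symm hij, Ne.symm hil, Ne.symm hjl])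
      have F2x : xe j + xe l ≤ ye i + xe j + xe l := xpair_le (hjl) (by simp [Finsupp.add_apply, hij, hil, hjl, Ne.symm hij, Ne.symm hil, Ne.symm hjl]) (by simp [Finsupp.add_apply, hij, hil, hjl, Ne.symm hij, Ne.symm hil, Ne.symm hjl])
      have F2y : ¬ ye j + ye l ≤ ye i + xe j + xe l := not_ypair_le (hjl) (Or.inl (by simp [Finsupp.add_apply, hij, hil, hjl, Ne.symm hij, Ne.symm hil, Ne.symm hjl]))
      have F3x : ¬ xe j + xe l ≤ ye j + xe i + xe l := not_xpair_le (hjl) (Or.inl (by simp [Finsupp.add_apply, hij, hil, hjl, Ne.symm hij, Ne.symm hil, Ne.symm hjl]))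
      have F3y : ¬ ye j + ye l ≤ ye j + xe i + xe l := not_ypair_le (hjl) (Or.inr (by simp [Finsupp.add_apply, hij, hil, hjl, Ne.symm hij, Ne.symm hil, Ne.symm hjl]))
      have F4x : ¬ xe j + xe l ≤ ye l + xe i + xe j := not_xpair_le (hjl) (Or.inr (by simp [Finsupp.add_apply, hij, hil, hjl, Ne.symm hij, Ne.symm hil, Ne.symm hjl]))
      have F4y : ¬ ye j + ye l ≤ ye l + xe i + xe j := not_ypair_le (hjl) (Or.inl (by simp [Finsupp.add_apply, hij, hil, hjl, Ne.symm hij, Ne.symm hil, Ne.symm hjl]))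
      rw [coeff_mul_gen, coeff_mul_gen, coeff_mul_gen, coeff_mul_gen, if_neg F1x, if_pos F1y, if_pos F2x, if_neg F2y, if_neg F3x, if_neg F3y, if_neg F4x, if_neg F4y]
      have ts1 : ye i + ye j + ye l - (ye j + ye l) = ye i := by
          rw [show ye i + ye j + ye l = (ye j + ye l) + ye i by abel]; exact add_tsub_cancel_left _ _
      have ts2 : ye i + xe j + xe l - (xe j + xe l) = ye i := by
          rw [show ye i + xe j + xe l = (xe j + xe l) + ye i by abel]; exact add_tsub_cancel_left _ _
      rw [ts1, ts2]; ring
    · rw [hp, hq]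
      have F1x : ¬ xe l + xe i ≤ ye i + ye j + ye l := not_xpair_le (Ne.symm hil) (Or.inl (by simp [Finsupp.add_apply, hij, hil, hjl, Ne.symm hij, Ne.symm hil, Ne.symm hjl]))
      have F1y : ye l + ye i ≤ ye i + ye j + ye l := ypair_le (Ne.symm hil) (by simp [Finsupp.add_apply, hij, hil, hjl, Ne.symm hij, Ne.symm hil, Ne.symm hjl]) (by simp [Finsupp.add_apply, hij, hil, hjl, Ne.symm hij, Ne.symm hil, Ne.symm hjl])
      have F2x : ¬ xe l + xe i ≤ ye i + xe j + xe l := not_xpair_le (Ne.symm hil) (Or.inr (by simp [Finsupp.add_apply, hij, hil, hjl, Ne.symm hij, Ne.symm hil, Ne.symm hjl]))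
      have F2y : ¬ ye l + ye i ≤ ye i + xe j + xe l := not_ypair_le (Ne.symm hil) (Or.inl (by simp [Finsupp.add_apply, hij, hil, hjl, Ne.symm hij, Ne.symm hil, Ne.symm hjl]))
      have F3x : xe l + xe i ≤ ye j + xe i + xe l := xpair_le (Ne.symm hil) (by simp [Finsupp.add_apply, hij, hil, hjl, Ne.symm hij, Ne.symm hil, Ne.symm hjl]) (by simp [Finsupp.add_apply, hij, hil, hjl, Ne.symm hij, Ne.symm hil, Ne.symm hjl])
      have F3y : ¬ ye l + ye i ≤ ye j + xe i + xe l := not_ypair_le (Ne.symm hil) (Or.inl (by simp [Finsupp.add_apply, hij, hil, hjl, Ne.symm hij, Ne.symm hil, Ne.symm hjl]))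
      have F4x : ¬ xe l + xe i ≤ ye l + xe i + xe j := not_xpair_le (Ne.symm hil) (Or.inl (by simp [Finsupp.add_apply, hij, hil, hjl, Ne.symm hij, Ne.symm hil, Ne.symm hjl]))
      have F4y : ¬ ye l + ye i ≤ ye l + xe i + xe j := not_ypair_le (Ne.symm hil) (Or.inr (by simp [Finsupp.add_apply, hij, hil, hjl, Ne.symm hij, Ne.symm hil, Ne.symm hjl]))
      rw [coeff_mul_gen, coeff_mul_gen, coeff_mul_gen, coeff_mul_gen, if_neg F1x, if_pos F1y, if_neg F2x, if_neg F2y, if_pos F3x, if_neg F3y, if_neg F4x, if_neg F4y]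
      have ts1 : ye i + ye j + ye l - (ye l + ye i) = ye j := by
          rw [show ye i + ye j + ye l = (ye l + ye i) + ye j by abel]; exact add_tsub_cancel_left _ _
      have ts2 : ye j + xe i + xe l - (xe l + xe i) = ye j := by
          rw [show ye j + xe i + xe l = (xe l + xe i) + ye j by abel]; exact add_tsub_cancel_left _ _
      rw [ts1, ts2]; ring
    · rw [hp, hq]
      have F1x : ¬ xe l + xe j ≤ ye i + ye j + ye l := not_xpair_le (Ne.symm hjl) (Or.inl (by simp [Finsupp.add_apply, hij, hil, hjl, Ne.symm hij, Ne.symm hil, Ne.symm hjl]))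
      have F1y : ye l + ye j ≤ ye i + ye j + ye l := ypair_le (Ne.symm hjl) (by simp [Finsupp.add_apply, hij, hil, hjl, Ne.symm hij, Ne.symm hil, Ne.symm hjl]) (by simp [Finsupp.add_apply, hij, hil, hjl, Ne.symm hij, Ne.symm hil, Ne.symm hjl])
      have F2x : xe l + xe j ≤ ye i + xe j + xe l := xpair_le (Ne.symm hjl) (by simp [Finsupp.add_apply, hij, hil, hjl, Ne.symm hij, Ne.symm hil, Ne.symm hjl]) (by simp [Finsupp.add_apply, hij, hil, hjl, Ne.symm hij, Ne.symm hil, Ne.symm hjl])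
      have F2y : ¬ ye l + ye j ≤ ye i + xe j + xe l := not_ypair_le (Ne.symm hjl) (Or.inl (by simp [Finsupp.add_apply, hij, hil, hjl, Ne.symm hij, Ne.symm hil, Ne.symm hjl]))
      have F3x : ¬ xe l + xe j ≤ ye j + xe i + xe l := not_xpair_le (Ne.symm hjl) (Or.inr (by simp [Finsupp.add_apply, hij, hil, hjl, Ne.symm hij, Ne.symm hil, Ne.symm hjl]))
      have F3y : ¬ ye l + ye j ≤ ye j + xe i + xe l := not_ypair_le (Ne.symm hjl) (Or.inl (by simp [Finsupp.add_apply, hij, hil, hjl, Ne.symm hij, Ne.symm hil, Ne.symm hjl]))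
      have F4x : ¬ xe l + xe j ≤ ye l + xe i + xe j := not_xpair_le (Ne.symm hjl) (Or.inl (by simp [Finsupp.add_apply, hij, hil, hjl, Ne.symm hij, Ne.symm hil, Ne.symm hjl]))
      have F4y : ¬ ye l + ye j ≤ ye l + xe i + xe j := not_ypair_le (Ne.symm hjl) (Or.inr (by simp [Finsupp.add_apply, hij, hil, hjl, Ne.symm hij, Ne.symm hil, Ne.symm hjl]))
      rw [coeff_mul_gen, coeff_mul_gen, coeff_mul_gen, coeff_mul_gen, if_neg F1x, if_pos F1y, if_pos F2x, if_neg F2y, if_neg F3x, if_neg F3y, if_neg F4x, if_neg F4y]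
      have ts1 : ye i + ye j + ye l - (ye l + ye j) = ye i := by
          rw [show ye i + ye j + ye l = (ye l + ye j) + ye i by abel]; exact add_tsub_cancel_left _ _
      have ts2 : ye i + xe j + xe l - (xe l + xe j) = ye i := by
          rw [show ye i + xe j + xe l = (xe l + xe j) + ye i by abel]; exact add_tsub_cancel_left _ _
      rw [ts1, ts2]; ring
    · exact absurd (hp.trans hq.symm) hpq

lemma good_zero : Good (0 : MvPolynomial σ3 k) := by
  refine ⟨by simp, fun s => by simp, fun a b => by simp, fun a b => by simp,
    fun i j l _ _ _ => by simp, fun i j l _ _ _ => by simp⟩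

lemma good_add {f g : MvPolynomial σ3 k} (hf : Good f) (hg : Good g) : Good (f + g) := by
  obtain ⟨f0, f1, f2, f3, f4, f5⟩ := hf
  obtain ⟨g0, g1, g2, g3, g4, g5⟩ := hg
  refine ⟨?_, ?_, ?_, ?_, ?_, ?_⟩
  · rw [coeff_add, f0, g0]; ring
  · intro s; rw [coeff_add, f1 s, g1 s]; ring
  · intro a b; rw [coeff_add, f2 a b, g2 a b]; ring
  · intro a b
    simp only [coeff_add]
    linear_combination f3 a b + g3 a b
  · intro i j l hij hil hjl
    simp only [coeff_add]
    linear_combination f4 i j l hij hil hjl + g4 i j l hij hil hjl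
  · intro i j l hij hil hjl
    simp only [coeff_add]
    linear_combination f5 i j l hij hil hjl + g5 i j l hij hil hjl

lemma good_of_mem {f : MvPolynomial σ3 k}
    (hf : f ∈ pbei k (⊤ : SimpleGraph (Fin 3))) : Good f := by
  have H : ∀ x ∈ pbei k (⊤ : SimpleGraph (Fin 3)),
      ∀ g : MvPolynomial σ3 k, Good (g * x) := by
    intro x hx
    refine Submodule.span_induction ?_ ?_ ?_ ?_ hx
    · rintro y ⟨p, q, hadj, rfl⟩ g
      exact good_mul_gen g p q (by simpa using hadj)
    · intro g; rw [mul_zero]; exact good_zero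
    · intro y z _ _ hy hz g; rw [mul_add]; exact good_add (hy g) (hz g)
    · intro a y _ hy g
      rw [smul_eq_mul, ← mul_assoc]
      exact hy (g * a)
  simpa using H f hf 1

/-! ### mDeg of binomials -/

lemma mDeg_binomial {M M' : σ3 →₀ ℕ} (h : m.toSyn M' < m.toSyn M) :
    (monomial M (1 : k) - monomial M' 1) ≠ 0 ∧
      mDeg m (monomial M (1 : k) - monomial M' 1) = M := by
  have hne : M ≠ M' := fun he => absurd h (by rw [he]; exact lt_irrefl _)
  have hco : coeff M (monomial M (1 : k) - monomial M' 1) = 1 := by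
    rw [coeff_sub, coeff_monomial, coeff_monomial, if_pos rfl, if_neg (Ne.symm hne), sub_zero]
  have h0 : (monomial M (1 : k) - monomial M' 1) ≠ 0 := fun he => by simp [he] at hco
  refine ⟨h0, ?_⟩
  have hMmem : M ∈ (monomial M (1 : k) - monomial M' 1).support :=
    mem_support_iff.mpr (by rw [hco]; exact one_ne_zero)
  have hsub : (monomial M (1 : k) - monomial M' 1).support ⊆ {M, M'} := by
    intro d hd
    rw [mem_support_iff, coeff_sub, coeff_monomial, coeff_monomial] at hd
    by_contra hdne
    simp only [Finset.mem_insert, Finset.mem_singleton] at hdne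
    push_neg at hdne
    rw [if_neg (fun he => hdne.1 he.symm), if_neg (fun he => hdne.2 he.symm)] at hd
    simp at hd
  apply m.toSyn.injective
  apply le_antisymm
  · rw [mDeg]
    simp only [AddEquiv.apply_symm_apply]
    apply Finset.sup_le
    intro d hd
    rcases Finset.mem_insert.mp (hsub hd) with rfl | hd'
    · exact le_rfl
    · rw [Finset.mem_singleton.mp hd']
      exact le_of_lt h
  · exact le_mDeg m hMmem

/-! ### membership reduction via the squarefree hypothesis -/

lemma key_reduction
    (hyp : ∃ S : Set (MvPolynomial (Fin 3 ⊕ Fin 3) k),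
        (∀ g ∈ S, ∃ d : (Fin 3 ⊕ Fin 3) →₀ ℕ,
          (∀ s, d s ≤ 1) ∧ g = monomial d (1 : k)) ∧
        initialIdeal m (pbei k (⊤ : SimpleGraph (Fin 3))) = Ideal.span S)
    {F : MvPolynomial σ3 k} (hFI : F ∈ pbei k (⊤ : SimpleGraph (Fin 3))) (hF0 : F ≠ 0) :
    ∃ f ∈ pbei k (⊤ : SimpleGraph (Fin 3)), f ≠ 0 ∧ (∀ s, mDeg m f s ≤ 1) ∧
      mDeg m f ≤ mDeg m F := by
  obtain ⟨S, hsf, hspan⟩ := hyp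
  have hS_eq : S = (fun d => monomial d (1 : k)) ''
      {d | (∀ s, d s ≤ 1) ∧ monomial d (1 : k) ∈ S} := by
    ext g
    constructor
    · intro hg
      obtain ⟨d, hd1, rfl⟩ := hsf g hg
      exact ⟨d, ⟨hd1, hg⟩, rfl⟩
    · rintro ⟨d, ⟨-, hd2⟩, rfl⟩
      exact hd2
  have hI_eq : initialIdeal m (pbei k (⊤ : SimpleGraph (Fin 3))) =
      Ideal.span ((fun e => monomial e (1 : k)) ''
        {e | ∃ f ∈ pbei k (⊤ : SimpleGraph (Fin 3)), f ≠ 0 ∧ mDeg m f = e}) := by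
    unfold initialIdeal
    congr 1
    ext g
    constructor
    · rintro ⟨f, hf, h0, rfl⟩
      exact ⟨mDeg m f, ⟨f, hf, h0, rfl⟩, rfl⟩
    · rintro ⟨e, ⟨f, hf, h0, rfl⟩, rfl⟩
      exact ⟨f, hf, h0, rfl⟩
  have hmem : monomial (mDeg m F) (1 : k) ∈
      initialIdeal m (pbei k (⊤ : SimpleGraph (Fin 3))) :=
    Ideal.subset_span ⟨F, hFI, hF0, rfl⟩
  rw [hspan, hS_eq, mem_ideal_span_monomial_image] at hmem
  obtain ⟨d, ⟨hd1, hdS⟩, hdle⟩ := hmem (mDeg m F) (by simp [support_monomial])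
  have hd_in : monomial d (1 : k) ∈ initialIdeal m (pbei k (⊤ : SimpleGraph (Fin 3))) := by
    rw [hspan]
    exact Ideal.subset_span hdS
  rw [hI_eq, mem_ideal_span_monomial_image] at hd_in
  obtain ⟨e, ⟨f, hf, h0, he⟩, hed⟩ := hd_in d (by simp [support_monomial])
  refine ⟨f, hf, h0, ?_, ?_⟩
  · intro s
    rw [he]
    exact le_trans (hed s) (hd1 s)
  · rw [he]
    exact le_trans hed hdle

lemma decomp {a b c : σ3} (hab : a ≠ b) (hac : a ≠ c) (hbc : b ≠ c) {d : σ3 →₀ ℕ}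
    (h : d ≤ Finsupp.single a 1 + Finsupp.single b 1 + Finsupp.single c 1) :
    d = Finsupp.single a (d a) + Finsupp.single b (d b) + Finsupp.single c (d c) ∧
      d a ≤ 1 ∧ d b ≤ 1 ∧ d c ≤ 1 := by
  have hpt := Finsupp.le_def.mp h
  refine ⟨?_, ?_, ?_, ?_⟩
  · ext s
    have hs := hpt s
    simp only [Finsupp.add_apply, Finsupp.single_apply] at hs ⊢
    by_cases h1 : a = s
    · have hb : b ≠ s := h1 ▸ Ne.symm hab
      have hc : c ≠ s := h1 ▸ Ne.symm hac
      simp [h1, hb, hc]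
    · by_cases h2 : b = s
      · have hc : c ≠ s := h2 ▸ Ne.symm hbc
        simp [h1, h2, hc]
      · by_cases h3 : c = s
        · simp [h1, h2, h3]
        · simp only [h1, h2, h3, if_false] at hs ⊢
          omega
  · have hs := hpt a
    simp [Finsupp.add_apply, Finsupp.single_apply, Ne.symm hab, Ne.symm hac] at hs
    omega
  · have hs := hpt b
    simp [Finsupp.add_apply, Finsupp.single_apply, hab, Ne.symm hbc] at hs
    omega
  · have hs := hpt c
    simp [Finsupp.add_apply, Finsupp.single_apply, hac, hbc] at hs
    omega

lemma syn_cancel_right {u v w : σ3 →₀ ℕ}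
    (h : m.toSyn (u + w) ≤ m.toSyn (v + w)) : m.toSyn u ≤ m.toSyn v := by
  rw [map_add, map_add] at h
  exact le_of_add_le_add_right h

/-- Branch C : `w = x_l y_i y_j` is not dominated by any squarefree leading term. -/
lemma branchC (i j l : Fin 3) (hij : i ≠ j) (hil : i ≠ l) (hjl : j ≠ l)
    (hP : m.toSyn (ye i + ye j) < m.toSyn (xe i + xe j))
    (hRi : m.toSyn (xe l + ye i) < m.toSyn (xe i + ye l))
    (hRj : m.toSyn (xe l + ye j) < m.toSyn (xe j + ye l))
    {f : MvPolynomial σ3 k} (hfI : f ∈ pbei k (⊤ : SimpleGraph (Fin 3))) (hf0 : f ≠ 0)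
    (hle : mDeg m f ≤ xe l + ye i + ye j) : False := by
  obtain ⟨g0, g1, g2, g3, g4, g5⟩ := good_of_mem hfI
  set d := mDeg m f with hd
  have hcoeff : coeff d f ≠ 0 := mem_support_iff.mp (mDeg_mem_support m hf0)
  obtain ⟨hdec, h1, h2, h3⟩ := decomp (a := Sum.inl l) (b := Sum.inr i) (c := Sum.inr j)
    (by simp) (by simp) (by simp [hij]) hle
  rcases Nat.le_one_iff_eq_zero_or_eq_one.mp h1 with e1 | e1 <;>
    rcases Nat.le_one_iff_eq_zero_or_eq_one.mp h2 with e2 | e2 <;>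
      rcases Nat.le_one_iff_eq_zero_or_eq_one.mp h3 with e3 | e3 <;>
        rw [e1, e2, e3] at hdec <;>
          try simp only [Finsupp.single_zero, zero_add, add_zero] at hdec
  -- (0,0,0)
  · exact hcoeff (by rw [hdec]; exact g0)
  -- (0,0,1) : d = ye j
  · exact hcoeff (by rw [hdec]; exact g1 (Sum.inr j))
  -- (0,1,0) : d = ye i
  · exact hcoeff (by rw [hdec]; exact g1 (Sum.inr i))
  -- (0,1,1) : d = ye i + ye j
  · have hyy : coeff (ye i + ye j) f ≠ 0 := hdec ▸ hcoeff
    have g3' := g3 i j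
    have hxx : coeff (xe i + xe j) f ≠ 0 := by
      intro hz
      rw [hz, zero_add] at g3'
      exact hyy g3'
    have hs := le_mDeg m (mem_support_iff.mpr hxx)
    rw [← hd, hdec] at hs
    exact absurd hP (not_lt.mpr hs)
  -- (1,0,0) : d = xe l
  · exact hcoeff (by rw [hdec]; exact g1 (Sum.inl l))
  -- (1,0,1) : d = xe l + ye j
  · exact hcoeff (by rw [hdec]; exact g2 l j)
  -- (1,1,0) : d = xe l + ye i
  · exact hcoeff (by rw [hdec]; exact g2 l i)
  -- (1,1,1) : d = xe l + ye i + ye j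
  · rw [show Finsupp.single (Sum.inl l) (1:ℕ) = xe l from rfl,
      show Finsupp.single (Sum.inr i) (1:ℕ) = ye i from rfl,
      show Finsupp.single (Sum.inr j) (1:ℕ) = ye j from rfl] at hdec
    have w_ne : coeff (xe l + ye i + ye j) f ≠ 0 := hdec ▸ hcoeff
    have hz1 : coeff (xe i + ye j + ye l) f = 0 := by
      by_contra hnz
      have hs := le_mDeg m (mem_support_iff.mpr hnz)
      rw [← hd, hdec] at hs
      rw [show xe i + ye j + ye l = (xe i + ye l) + ye j by abel,
        show xe l + ye i + ye j = (xe l + ye i) + ye j by abel] at hs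
      exact absurd hRi (not_lt.mpr (syn_cancel_right m hs))
    have hz2 : coeff (xe j + ye i + ye l) f = 0 := by
      by_contra hnz
      have hs := le_mDeg m (mem_support_iff.mpr hnz)
      rw [← hd, hdec] at hs
      rw [show xe j + ye i + ye l = (xe j + ye l) + ye i by abel,
        show xe l + ye i + ye j = (xe l + ye j) + ye i by abel] at hs
      exact absurd hRj (not_lt.mpr (syn_cancel_right m hs))
    have g4' := g4 i j l hij hil hjl
    have hxxx : coeff (xe i + xe j + xe l) f ≠ 0 := by
      intro hz
      rw [hz, hz1, hz2] at g4'
      simp only [zero_add, add_zero] at g4'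
      exact w_ne g4'
    have hs := le_mDeg m (mem_support_iff.mpr hxxx)
    rw [← hd, hdec] at hs
    rw [show xe i + xe j + xe l = (xe i + xe j) + xe l by abel,
      show xe l + ye i + ye j = (ye i + ye j) + xe l by abel] at hs
    exact absurd hP (not_lt.mpr (syn_cancel_right m hs))

/-- Branch D : `w = x_j x_l y_i` is not dominated by any squarefree leading term. -/
lemma branchD (i j l : Fin 3) (hij : i ≠ j) (hil : i ≠ l) (hjl : j ≠ l)
    (hP : m.toSyn (xe j + xe l) < m.toSyn (ye j + ye l))
    (hRj : m.toSyn (xe j + ye i) < m.toSyn (xe i + ye j))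
    (hRl : m.toSyn (xe l + ye i) < m.toSyn (xe i + ye l))
    {f : MvPolynomial σ3 k} (hfI : f ∈ pbei k (⊤ : SimpleGraph (Fin 3))) (hf0 : f ≠ 0)
    (hle : mDeg m f ≤ xe j + xe l + ye i) : False := by
  obtain ⟨g0, g1, g2, g3, g4, g5⟩ := good_of_mem hfI
  set d := mDeg m f with hd
  have hcoeff : coeff d f ≠ 0 := mem_support_iff.mp (mDeg_mem_support m hf0)
  obtain ⟨hdec, h1, h2, h3⟩ := decomp (a := Sum.inl j) (b := Sum.inl l) (c := Sum.inr i)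
    (by simp [hjl]) (by simp) (by simp) hle
  rcases Nat.le_one_iff_eq_zero_or_eq_one.mp h1 with e1 | e1 <;>
    rcases Nat.le_one_iff_eq_zero_or_eq_one.mp h2 with e2 | e2 <;>
      rcases Nat.le_one_iff_eq_zero_or_eq_one.mp h3 with e3 | e3 <;>
        rw [e1, e2, e3] at hdec <;>
          try simp only [Finsupp.single_zero, zero_add, add_zero] at hdec
  · exact hcoeff (by rw [hdec]; exact g0)
  · exact hcoeff (by rw [hdec]; exact g1 (Sum.inr i))
  · exact hcoeff (by rw [hdec]; exact g1 (Sum.inl l))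
  · exact hcoeff (by rw [hdec]; exact g2 l i)
  · exact hcoeff (by rw [hdec]; exact g1 (Sum.inl j))
  · exact hcoeff (by rw [hdec]; exact g2 j i)
  -- (1,1,0) : d = xe j + xe l
  · have hxx : coeff (xe j + xe l) f ≠ 0 := hdec ▸ hcoeff
    have g3' := g3 j l
    have hyy : coeff (ye j + ye l) f ≠ 0 := by
      intro hz
      rw [hz, add_zero] at g3'
      exact hxx g3'
    have hs := le_mDeg m (mem_support_iff.mpr hyy)
    rw [← hd, hdec] at hs
    exact absurd hP (not_lt.mpr hs)
  -- (1,1,1) : d = xe j + xe l + ye i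
  · rw [show Finsupp.single (Sum.inl j) (1:ℕ) = xe j from rfl,
      show Finsupp.single (Sum.inl l) (1:ℕ) = xe l from rfl,
      show Finsupp.single (Sum.inr i) (1:ℕ) = ye i from rfl,
      show xe j + xe l + ye i = ye i + xe j + xe l by abel] at hdec
    have w_ne : coeff (ye i + xe j + xe l) f ≠ 0 := hdec ▸ hcoeff
    have hz1 : coeff (ye j + xe i + xe l) f = 0 := by
      by_contra hnz
      have hs := le_mDeg m (mem_support_iff.mpr hnz)
      rw [← hd, hdec] at hs
      rw [show ye j + xe i + xe l = (xe i + ye j) + xe l by abel,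
        show ye i + xe j + xe l = (xe j + ye i) + xe l by abel] at hs
      exact absurd hRj (not_lt.mpr (syn_cancel_right m hs))
    have hz2 : coeff (ye l + xe i + xe j) f = 0 := by
      by_contra hnz
      have hs := le_mDeg m (mem_support_iff.mpr hnz)
      rw [← hd, hdec] at hs
      rw [show ye l + xe i + xe j = (xe i + ye l) + xe j by abel,
        show ye i + xe j + xe l = (xe l + ye i) + xe j by abel] at hs
      exact absurd hRl (not_lt.mpr (syn_cancel_right m hs))
    have g5' := g5 i j l hij hil hjl
    have hyyy : coeff (ye i + ye j + ye l) f ≠ 0 := by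
      intro hz
      rw [hz, hz1, hz2] at g5'
      simp only [zero_add, add_zero] at g5'
      exact w_ne g5'
    have hs := le_mDeg m (mem_support_iff.mpr hyyy)
    rw [← hd, hdec] at hs
    rw [show ye i + ye j + ye l = (ye j + ye l) + ye i by abel,
      show ye i + xe j + xe l = (xe j + xe l) + ye i by abel] at hs
    exact absurd hP (not_lt.mpr (syn_cancel_right m hs))

/-- Branch A : `w = y_i y_j y_l` is not dominated, when all pairs are `x`-leading. -/
lemma branchA (i j l : Fin 3) (hij : i ≠ j) (hil : i ≠ l) (hjl : j ≠ l)
    (hPij : m.toSyn (ye i + ye j) < m.toSyn (xe i + xe j))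
    (hPil : m.toSyn (ye i + ye l) < m.toSyn (xe i + xe l))
    (hPjl : m.toSyn (ye j + ye l) < m.toSyn (xe j + xe l))
    {f : MvPolynomial σ3 k} (hfI : f ∈ pbei k (⊤ : SimpleGraph (Fin 3))) (hf0 : f ≠ 0)
    (hle : mDeg m f ≤ ye i + ye j + ye l) : False := by
  obtain ⟨g0, g1, g2, g3, g4, g5⟩ := good_of_mem hfI
  set d := mDeg m f with hd
  have hcoeff : coeff d f ≠ 0 := mem_support_iff.mp (mDeg_mem_support m hf0)
  obtain ⟨hdec, h1, h2, h3⟩ := decomp (a := Sum.inr i) (b := Sum.inr j) (c := Sum.inr l)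
    (by simp [hij]) (by simp [hil]) (by simp [hjl]) hle
  rcases Nat.le_one_iff_eq_zero_or_eq_one.mp h1 with e1 | e1 <;>
    rcases Nat.le_one_iff_eq_zero_or_eq_one.mp h2 with e2 | e2 <;>
      rcases Nat.le_one_iff_eq_zero_or_eq_one.mp h3 with e3 | e3 <;>
        rw [e1, e2, e3] at hdec <;>
          try simp only [Finsupp.single_zero, zero_add, add_zero] at hdec
  · exact hcoeff (by rw [hdec]; exact g0)
  · exact hcoeff (by rw [hdec]; exact g1 (Sum.inr l))
  · exact hcoeff (by rw [hdec]; exact g1 (Sum.inr j))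
  -- d = ye j + ye l
  · have hyy : coeff (ye j + ye l) f ≠ 0 := hdec ▸ hcoeff
    have g3' := g3 j l
    have hxx : coeff (xe j + xe l) f ≠ 0 := by
      intro hz; rw [hz, zero_add] at g3'; exact hyy g3'
    have hs := le_mDeg m (mem_support_iff.mpr hxx)
    rw [← hd, hdec] at hs
    exact absurd hPjl (not_lt.mpr hs)
  · exact hcoeff (by rw [hdec]; exact g1 (Sum.inr i))
  -- d = ye i + ye l
  · have hyy : coeff (ye i + ye l) f ≠ 0 := hdec ▸ hcoeff
    have g3' := g3 i l
    have hxx : coeff (xe i + xe l) f ≠ 0 := by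
      intro hz; rw [hz, zero_add] at g3'; exact hyy g3'
    have hs := le_mDeg m (mem_support_iff.mpr hxx)
    rw [← hd, hdec] at hs
    exact absurd hPil (not_lt.mpr hs)
  -- d = ye i + ye j
  · have hyy : coeff (ye i + ye j) f ≠ 0 := hdec ▸ hcoeff
    have g3' := g3 i j
    have hxx : coeff (xe i + xe j) f ≠ 0 := by
      intro hz; rw [hz, zero_add] at g3'; exact hyy g3'
    have hs := le_mDeg m (mem_support_iff.mpr hxx)
    rw [← hd, hdec] at hs
    exact absurd hPij (not_lt.mpr hs)
  -- d = ye i + ye j + ye l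
  · rw [show Finsupp.single (Sum.inr i) (1:ℕ) = ye i from rfl,
      show Finsupp.single (Sum.inr j) (1:ℕ) = ye j from rfl,
      show Finsupp.single (Sum.inr l) (1:ℕ) = ye l from rfl] at hdec
    have w_ne : coeff (ye i + ye j + ye l) f ≠ 0 := hdec ▸ hcoeff
    have hz1 : coeff (ye i + xe j + xe l) f = 0 := by
      by_contra hnz
      have hs := le_mDeg m (mem_support_iff.mpr hnz)
      rw [← hd, hdec] at hs
      rw [show ye i + xe j + xe l = (xe j + xe l) + ye i by abel,
        show ye i + ye j + ye l = (ye j + ye l) + ye i by abel] at hs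
      exact absurd hPjl (not_lt.mpr (syn_cancel_right m hs))
    have hz2 : coeff (ye j + xe i + xe l) f = 0 := by
      by_contra hnz
      have hs := le_mDeg m (mem_support_iff.mpr hnz)
      rw [← hd, hdec] at hs
      rw [show ye j + xe i + xe l = (xe i + xe l) + ye j by abel,
        show ye i + ye j + ye l = (ye i + ye l) + ye j by abel] at hs
      exact absurd hPil (not_lt.mpr (syn_cancel_right m hs))
    have hz3 : coeff (ye l + xe i + xe j) f = 0 := by
      by_contra hnz
      have hs := le_mDeg m (mem_support_iff.mpr hnz)
      rw [← hd, hdec] at hs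
      rw [show ye l + xe i + xe j = (xe i + xe j) + ye l by abel,
        show ye i + ye j + ye l = (ye i + ye j) + ye l by abel] at hs
      exact absurd hPij (not_lt.mpr (syn_cancel_right m hs))
    have g5' := g5 i j l hij hil hjl
    rw [hz1, hz2, hz3] at g5'
    simp only [zero_add, add_zero] at g5'
    exact w_ne g5'

/-- Branch B : `w = x_i x_j x_l` is not dominated, when all pairs are `y`-leading. -/
lemma branchB (i j l : Fin 3) (hij : i ≠ j) (hil : i ≠ l) (hjl : j ≠ l)
    (hPij : m.toSyn (xe i + xe j) < m.toSyn (ye i + ye j))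
    (hPil : m.toSyn (xe i + xe l) < m.toSyn (ye i + ye l))
    (hPjl : m.toSyn (xe j + xe l) < m.toSyn (ye j + ye l))
    {f : MvPolynomial σ3 k} (hfI : f ∈ pbei k (⊤ : SimpleGraph (Fin 3))) (hf0 : f ≠ 0)
    (hle : mDeg m f ≤ xe i + xe j + xe l) : False := by
  obtain ⟨g0, g1, g2, g3, g4, g5⟩ := good_of_mem hfI
  set d := mDeg m f with hd
  have hcoeff : coeff d f ≠ 0 := mem_support_iff.mp (mDeg_mem_support m hf0)
  obtain ⟨hdec, h1, h2, h3⟩ := decomp (a := Sum.inl i) (b := Sum.inl j) (c := Sum.inl l)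
    (by simp [hij]) (by simp [hil]) (by simp [hjl]) hle
  rcases Nat.le_one_iff_eq_zero_or_eq_one.mp h1 with e1 | e1 <;>
    rcases Nat.le_one_iff_eq_zero_or_eq_one.mp h2 with e2 | e2 <;>
      rcases Nat.le_one_iff_eq_zero_or_eq_one.mp h3 with e3 | e3 <;>
        rw [e1, e2, e3] at hdec <;>
          try simp only [Finsupp.single_zero, zero_add, add_zero] at hdec
  · exact hcoeff (by rw [hdec]; exact g0)
  · exact hcoeff (by rw [hdec]; exact g1 (Sum.inl l))
  · exact hcoeff (by rw [hdec]; exact g1 (Sum.inl j))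
  -- d = xe j + xe l
  · have hxx : coeff (xe j + xe l) f ≠ 0 := hdec ▸ hcoeff
    have g3' := g3 j l
    have hyy : coeff (ye j + ye l) f ≠ 0 := by
      intro hz; rw [hz, add_zero] at g3'; exact hxx g3'
    have hs := le_mDeg m (mem_support_iff.mpr hyy)
    rw [← hd, hdec] at hs
    exact absurd hPjl (not_lt.mpr hs)
  · exact hcoeff (by rw [hdec]; exact g1 (Sum.inl i))
  -- d = xe i + xe l
  · have hxx : coeff (xe i + xe l) f ≠ 0 := hdec ▸ hcoeff
    have g3' := g3 i l
    have hyy : coeff (ye i + ye l) f ≠ 0 := by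
      intro hz; rw [hz, add_zero] at g3'; exact hxx g3'
    have hs := le_mDeg m (mem_support_iff.mpr hyy)
    rw [← hd, hdec] at hs
    exact absurd hPil (not_lt.mpr hs)
  -- d = xe i + xe j
  · have hxx : coeff (xe i + xe j) f ≠ 0 := hdec ▸ hcoeff
    have g3' := g3 i j
    have hyy : coeff (ye i + ye j) f ≠ 0 := by
      intro hz; rw [hz, add_zero] at g3'; exact hxx g3'
    have hs := le_mDeg m (mem_support_iff.mpr hyy)
    rw [← hd, hdec] at hs
    exact absurd hPij (not_lt.mpr hs)
  -- d = xe i + xe j + xe l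
  · rw [show Finsupp.single (Sum.inl i) (1:ℕ) = xe i from rfl,
      show Finsupp.single (Sum.inl j) (1:ℕ) = xe j from rfl,
      show Finsupp.single (Sum.inl l) (1:ℕ) = xe l from rfl] at hdec
    have w_ne : coeff (xe i + xe j + xe l) f ≠ 0 := hdec ▸ hcoeff
    have hz1 : coeff (xe i + ye j + ye l) f = 0 := by
      by_contra hnz
      have hs := le_mDeg m (mem_support_iff.mpr hnz)
      rw [← hd, hdec] at hs
      rw [show xe i + ye j + ye l = (ye j + ye l) + xe i by abel,
        show xe i + xe j + xe l = (xe j + xe l) + xe i by abel] at hs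
      exact absurd hPjl (not_lt.mpr (syn_cancel_right m hs))
    have hz2 : coeff (xe j + ye i + ye l) f = 0 := by
      by_contra hnz
      have hs := le_mDeg m (mem_support_iff.mpr hnz)
      rw [← hd, hdec] at hs
      rw [show xe j + ye i + ye l = (ye i + ye l) + xe j by abel,
        show xe i + xe j + xe l = (xe i + xe l) + xe j by abel] at hs
      exact absurd hPil (not_lt.mpr (syn_cancel_right m hs))
    have hz3 : coeff (xe l + ye i + ye j) f = 0 := by
      by_contra hnz
      have hs := le_mDeg m (mem_support_iff.mpr hnz)
      rw [← hd, hdec] at hs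
      rw [show xe l + ye i + ye j = (ye i + ye j) + xe l by abel,
        show xe i + xe j + xe l = (xe i + xe j) + xe l by abel] at hs
      exact absurd hPij (not_lt.mpr (syn_cancel_right m hs))
    have g4' := g4 i j l hij hil hjl
    rw [hz1, hz2, hz3] at g4'
    simp only [zero_add, add_zero] at g4'
    exact w_ne g4'

/-! ### order helpers -/

lemma syn_total {u v : σ3 →₀ ℕ} (hne : u ≠ v) (h : ¬ m.toSyn u < m.toSyn v) :
    m.toSyn v < m.toSyn u := by
  rcases lt_trichotomy (m.toSyn u) (m.toSyn v) with h' | h' | h'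
  · exact absurd h' h
  · exact absurd (m.toSyn.injective h') hne
  · exact h'

lemma syn_cancel_right_lt {u v w : σ3 →₀ ℕ}
    (h : m.toSyn (u + w) < m.toSyn (v + w)) : m.toSyn u < m.toSyn v := by
  rw [map_add, map_add] at h
  exact lt_of_add_lt_add_right h

lemma ne_of_apply_ne {u v : σ3 →₀ ℕ} (s : σ3) (h : u s ≠ v s) : u ≠ v :=
  fun he => h (by rw [he])

lemma neZ (p : Fin 3) : ye p ≠ xe p :=
  ne_of_apply_ne (Sum.inl p) (by simp)

lemma neP (p q : Fin 3) : ye p + ye q ≠ xe p + xe q := by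
  refine ne_of_apply_ne (Sum.inl p) ?_
  simp only [Finsupp.add_apply, xe_inl, ye_inl, if_pos rfl]
  split_ifs <;> omega

lemma neR (p q : Fin 3) (hqp : q ≠ p) : xe q + ye p ≠ xe p + ye q := by
  refine ne_of_apply_ne (Sum.inl p) ?_
  simp [Finsupp.add_apply, hqp]

/-! ### witnesses: elements of the ideal with non-squarefree leading monomial -/

lemma gen_mem (p q : Fin 3) (h : p ≠ q) :
    (X (Sum.inl p) * X (Sum.inl q) - X (Sum.inr p) * X (Sum.inr q) : MvPolynomial σ3 k)
      ∈ pbei k (⊤ : SimpleGraph (Fin 3)) :=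
  Ideal.subset_span ⟨p, q, by simp [h], rfl⟩

lemma monomial_eq_prod4 (s1 s2 s3 s4 : σ3) :
    (X s1 * X s2 * X s3 * X s4 : MvPolynomial σ3 k) =
      monomial (Finsupp.single s1 1 + Finsupp.single s2 1 + Finsupp.single s3 1 +
        Finsupp.single s4 1) 1 := by
  rw [X, X, X, X, monomial_mul, monomial_mul, monomial_mul]
  norm_num

/-- Witness for branch C with `t = l` : `y_a y_b (x_c^2 - y_c^2)`. -/
lemma witness1 (a b c : Fin 3) (hab : a ≠ b) (hac : a ≠ c) (hbc : b ≠ c)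
    (hz : m.toSyn (ye c) < m.toSyn (xe c)) :
    ∃ F : MvPolynomial σ3 k, F ∈ pbei k (⊤ : SimpleGraph (Fin 3)) ∧ F ≠ 0 ∧
      mDeg m F = ye a + ye b + xe c + xe c := by
  have hlt : m.toSyn (ye a + ye b + ye c + ye c) < m.toSyn (ye a + ye b + xe c + xe c) := by
    rw [show ye a + ye b + ye c + ye c = (ye a + ye b) + (ye c + ye c) by abel,
      show ye a + ye b + xe c + xe c = (ye a + ye b) + (xe c + xe c) by abel,
      map_add, map_add]
    simp only [map_add]
    exact add_lt_add_of_le_of_lt le_rfl (add_lt_add hz hz)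
  obtain ⟨h0, hdeg⟩ := mDeg_binomial (k := k) m hlt
  refine ⟨_, ?_, h0, hdeg⟩
  have hEq : (monomial (ye a + ye b + xe c + xe c) (1:k) - monomial (ye a + ye b + ye c + ye c) 1)
      = (X (Sum.inr b) * X (Sum.inr c)) *
          (X (Sum.inl a) * X (Sum.inl c) - X (Sum.inr a) * X (Sum.inr c))
        + (X (Sum.inl a) * X (Sum.inl c)) *
          (X (Sum.inl b) * X (Sum.inl c) - X (Sum.inr b) * X (Sum.inr c))
        - (X (Sum.inl c) * X (Sum.inl c)) *
          (X (Sum.inl a) * X (Sum.inl b) - X (Sum.inr a) * X (Sum.inr b)) := by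
    rw [show (monomial (ye a + ye b + xe c + xe c) (1:k)) =
        X (Sum.inr a) * X (Sum.inr b) * X (Sum.inl c) * X (Sum.inl c) from
          (monomial_eq_prod4 _ _ _ _).symm,
      show (monomial (ye a + ye b + ye c + ye c) (1:k)) =
        X (Sum.inr a) * X (Sum.inr b) * X (Sum.inr c) * X (Sum.inr c) from
          (monomial_eq_prod4 _ _ _ _).symm]
    ring
  rw [hEq]
  exact Ideal.sub_mem _
    (Ideal.add_mem _ (Ideal.mul_mem_left _ _ (gen_mem a c hac))
      (Ideal.mul_mem_left _ _ (gen_mem b c hbc)))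
    (Ideal.mul_mem_left _ _ (gen_mem a b hab))

/-- Witness for branch C with `t = j` : `-x_a y_b (x_c^2 - y_c^2)`. -/
lemma witness2 (a b c : Fin 3) (hab : a ≠ b) (hac : a ≠ c) (hbc : b ≠ c)
    (hz : m.toSyn (xe c) < m.toSyn (ye c)) :
    ∃ F : MvPolynomial σ3 k, F ∈ pbei k (⊤ : SimpleGraph (Fin 3)) ∧ F ≠ 0 ∧
      mDeg m F = xe a + ye b + ye c + ye c := by
  have hlt : m.toSyn (xe a + ye b + xe c + xe c) < m.toSyn (xe a + ye b + ye c + ye c) := by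
    rw [show xe a + ye b + xe c + xe c = (xe a + ye b) + (xe c + xe c) by abel,
      show xe a + ye b + ye c + ye c = (xe a + ye b) + (ye c + ye c) by abel,
      map_add, map_add]
    simp only [map_add]
    exact add_lt_add_of_le_of_lt le_rfl (add_lt_add hz hz)
  obtain ⟨h0, hdeg⟩ := mDeg_binomial (k := k) m hlt
  refine ⟨_, ?_, h0, hdeg⟩
  have hEq : (monomial (xe a + ye b + ye c + ye c) (1:k) - monomial (xe a + ye b + xe c + xe c) 1)
      = (X (Sum.inl c) * X (Sum.inr c)) *
          (X (Sum.inl a) * X (Sum.inl b) - X (Sum.inr a) * X (Sum.inr b))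
        - (X (Sum.inl c) * X (Sum.inr b)) *
          (X (Sum.inl a) * X (Sum.inl c) - X (Sum.inr a) * X (Sum.inr c))
        - (X (Sum.inl a) * X (Sum.inr c)) *
          (X (Sum.inl b) * X (Sum.inl c) - X (Sum.inr b) * X (Sum.inr c)) := by
    rw [show (monomial (xe a + ye b + ye c + ye c) (1:k)) =
        X (Sum.inl a) * X (Sum.inr b) * X (Sum.inr c) * X (Sum.inr c) from
          (monomial_eq_prod4 _ _ _ _).symm,
      show (monomial (xe a + ye b + xe c + xe c) (1:k)) =
        X (Sum.inl a) * X (Sum.inr b) * X (Sum.inl c) * X (Sum.inl c) from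
          (monomial_eq_prod4 _ _ _ _).symm]
    ring
  rw [hEq]
  exact Ideal.sub_mem _
    (Ideal.sub_mem _ (Ideal.mul_mem_left _ _ (gen_mem a b hab))
      (Ideal.mul_mem_left _ _ (gen_mem a c hac)))
    (Ideal.mul_mem_left _ _ (gen_mem b c hbc))

/-- Witness for branch D with `t = j` : `x_b y_c (x_a^2 - y_a^2)` with labels `(a,b,c)`. -/
lemma witness3 (a b c : Fin 3) (hab : a ≠ b) (hac : a ≠ c) (hbc : b ≠ c)
    (hz : m.toSyn (ye a) < m.toSyn (xe a)) :
    ∃ F : MvPolynomial σ3 k, F ∈ pbei k (⊤ : SimpleGraph (Fin 3)) ∧ F ≠ 0 ∧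
      mDeg m F = xe a + xe b + ye c + xe a := by
  have hlt : m.toSyn (xe b + ye c + ye a + ye a) < m.toSyn (xe a + xe b + ye c + xe a) := by
    rw [show xe b + ye c + ye a + ye a = (xe b + ye c) + (ye a + ye a) by abel,
      show xe a + xe b + ye c + xe a = (xe b + ye c) + (xe a + xe a) by abel,
      map_add, map_add]
    simp only [map_add]
    exact add_lt_add_of_le_of_lt le_rfl (add_lt_add hz hz)
  obtain ⟨h0, hdeg⟩ := mDeg_binomial (k := k) m hlt
  refine ⟨_, ?_, h0, hdeg⟩
  have hEq : (monomial (xe a + xe b + ye c + xe a) (1:k) - monomial (xe b + ye c + ye a + ye a) 1)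
      = (X (Sum.inl a) * X (Sum.inr c)) *
          (X (Sum.inl b) * X (Sum.inl a) - X (Sum.inr b) * X (Sum.inr a))
        + (X (Sum.inl b) * X (Sum.inr a)) *
          (X (Sum.inl c) * X (Sum.inl a) - X (Sum.inr c) * X (Sum.inr a))
        - (X (Sum.inl a) * X (Sum.inr a)) *
          (X (Sum.inl b) * X (Sum.inl c) - X (Sum.inr b) * X (Sum.inr c)) := by
    rw [show (monomial (xe a + xe b + ye c + xe a) (1:k)) =
        X (Sum.inl a) * X (Sum.inl b) * X (Sum.inr c) * X (Sum.inl a) from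
          (monomial_eq_prod4 _ _ _ _).symm,
      show (monomial (xe b + ye c + ye a + ye a) (1:k)) =
        X (Sum.inl b) * X (Sum.inr c) * X (Sum.inr a) * X (Sum.inr a) from
          (monomial_eq_prod4 _ _ _ _).symm]
    ring
  rw [hEq]
  exact Ideal.sub_mem _
    (Ideal.add_mem _ (Ideal.mul_mem_left _ _ (gen_mem b a (Ne.symm hab)))
      (Ideal.mul_mem_left _ _ (gen_mem c a (Ne.symm hac))))
    (Ideal.mul_mem_left _ _ (gen_mem b c hbc))

/-- Witness for branch D with `t = i` : `-x_a x_b (x_c^2 - y_c^2)`. -/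
lemma witness4 (a b c : Fin 3) (hab : a ≠ b) (hac : a ≠ c) (hbc : b ≠ c)
    (hz : m.toSyn (xe c) < m.toSyn (ye c)) :
    ∃ F : MvPolynomial σ3 k, F ∈ pbei k (⊤ : SimpleGraph (Fin 3)) ∧ F ≠ 0 ∧
      mDeg m F = xe a + xe b + ye c + ye c := by
  have hlt : m.toSyn (xe a + xe b + xe c + xe c) < m.toSyn (xe a + xe b + ye c + ye c) := by
    rw [show xe a + xe b + xe c + xe c = (xe a + xe b) + (xe c + xe c) by abel,
      show xe a + xe b + ye c + ye c = (xe a + xe b) + (ye c + ye c) by abel,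
      map_add, map_add]
    simp only [map_add]
    exact add_lt_add_of_le_of_lt le_rfl (add_lt_add hz hz)
  obtain ⟨h0, hdeg⟩ := mDeg_binomial (k := k) m hlt
  refine ⟨_, ?_, h0, hdeg⟩
  have hEq : (monomial (xe a + xe b + ye c + ye c) (1:k) - monomial (xe a + xe b + xe c + xe c) 1)
      = (X (Sum.inr c) * X (Sum.inr c)) *
          (X (Sum.inl a) * X (Sum.inl b) - X (Sum.inr a) * X (Sum.inr b))
        - (X (Sum.inl b) * X (Sum.inl c)) *
          (X (Sum.inl a) * X (Sum.inl c) - X (Sum.inr a) * X (Sum.inr c))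
        - (X (Sum.inr a) * X (Sum.inr c)) *
          (X (Sum.inl b) * X (Sum.inl c) - X (Sum.inr b) * X (Sum.inr c)) := by
    rw [show (monomial (xe a + xe b + ye c + ye c) (1:k)) =
        X (Sum.inl a) * X (Sum.inl b) * X (Sum.inr c) * X (Sum.inr c) from
          (monomial_eq_prod4 _ _ _ _).symm,
      show (monomial (xe a + xe b + xe c + xe c) (1:k)) =
        X (Sum.inl a) * X (Sum.inl b) * X (Sum.inl c) * X (Sum.inl c) from
          (monomial_eq_prod4 _ _ _ _).symm]
    ring
  rw [hEq]
  exact Ideal.sub_mem _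
    (Ideal.sub_mem _ (Ideal.mul_mem_left _ _ (gen_mem a b hab))
      (Ideal.mul_mem_left _ _ (gen_mem a c hac)))
    (Ideal.mul_mem_left _ _ (gen_mem b c hbc))

/-- Witness for branch A : `-y_a y_b (x_c^2 - y_c^2)`. -/
lemma witness5 (a b c : Fin 3) (hab : a ≠ b) (hac : a ≠ c) (hbc : b ≠ c)
    (hz : m.toSyn (xe c) < m.toSyn (ye c)) :
    ∃ F : MvPolynomial σ3 k, F ∈ pbei k (⊤ : SimpleGraph (Fin 3)) ∧ F ≠ 0 ∧
      mDeg m F = ye a + ye b + ye c + ye c := by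
  have hlt : m.toSyn (ye a + ye b + xe c + xe c) < m.toSyn (ye a + ye b + ye c + ye c) := by
    rw [show ye a + ye b + xe c + xe c = (ye a + ye b) + (xe c + xe c) by abel,
      show ye a + ye b + ye c + ye c = (ye a + ye b) + (ye c + ye c) by abel,
      map_add, map_add]
    simp only [map_add]
    exact add_lt_add_of_le_of_lt le_rfl (add_lt_add hz hz)
  obtain ⟨h0, hdeg⟩ := mDeg_binomial (k := k) m hlt
  refine ⟨_, ?_, h0, hdeg⟩
  have hEq : (monomial (ye a + ye b + ye c + ye c) (1:k) - monomial (ye a + ye b + xe c + xe c) 1)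
      = (X (Sum.inl c) * X (Sum.inl c)) *
          (X (Sum.inl a) * X (Sum.inl b) - X (Sum.inr a) * X (Sum.inr b))
        - (X (Sum.inr b) * X (Sum.inr c)) *
          (X (Sum.inl a) * X (Sum.inl c) - X (Sum.inr a) * X (Sum.inr c))
        - (X (Sum.inl a) * X (Sum.inl c)) *
          (X (Sum.inl b) * X (Sum.inl c) - X (Sum.inr b) * X (Sum.inr c)) := by
    rw [show (monomial (ye a + ye b + ye c + ye c) (1:k)) =
        X (Sum.inr a) * X (Sum.inr b) * X (Sum.inr c) * X (Sum.inr c) from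
          (monomial_eq_prod4 _ _ _ _).symm,
      show (monomial (ye a + ye b + xe c + xe c) (1:k)) =
        X (Sum.inr a) * X (Sum.inr b) * X (Sum.inl c) * X (Sum.inl c) from
          (monomial_eq_prod4 _ _ _ _).symm]
    ring
  rw [hEq]
  exact Ideal.sub_mem _
    (Ideal.sub_mem _ (Ideal.mul_mem_left _ _ (gen_mem a b hab))
      (Ideal.mul_mem_left _ _ (gen_mem a c hac)))
    (Ideal.mul_mem_left _ _ (gen_mem b c hbc))

/-- Witness for branch B : `x_a x_b (x_c^2 - y_c^2)`. -/
lemma witness6 (a b c : Fin 3) (hab : a ≠ b) (hac : a ≠ c) (hbc : b ≠ c)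
    (hz : m.toSyn (ye c) < m.toSyn (xe c)) :
    ∃ F : MvPolynomial σ3 k, F ∈ pbei k (⊤ : SimpleGraph (Fin 3)) ∧ F ≠ 0 ∧
      mDeg m F = xe a + xe b + xe c + xe c := by
  have hlt : m.toSyn (xe a + xe b + ye c + ye c) < m.toSyn (xe a + xe b + xe c + xe c) := by
    rw [show xe a + xe b + ye c + ye c = (xe a + xe b) + (ye c + ye c) by abel,
      show xe a + xe b + xe c + xe c = (xe a + xe b) + (xe c + xe c) by abel,
      map_add, map_add]
    simp only [map_add]
    exact add_lt_add_of_le_of_lt le_rfl (add_lt_add hz hz)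
  obtain ⟨h0, hdeg⟩ := mDeg_binomial (k := k) m hlt
  refine ⟨_, ?_, h0, hdeg⟩
  have hEq : (monomial (xe a + xe b + xe c + xe c) (1:k) - monomial (xe a + xe b + ye c + ye c) 1)
      = (X (Sum.inl b) * X (Sum.inl c)) *
          (X (Sum.inl a) * X (Sum.inl c) - X (Sum.inr a) * X (Sum.inr c))
        + (X (Sum.inr a) * X (Sum.inr c)) *
          (X (Sum.inl b) * X (Sum.inl c) - X (Sum.inr b) * X (Sum.inr c))
        - (X (Sum.inr c) * X (Sum.inr c)) *
          (X (Sum.inl a) * X (Sum.inl b) - X (Sum.inr a) * X (Sum.inr b)) := by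
    rw [show (monomial (xe a + xe b + xe c + xe c) (1:k)) =
        X (Sum.inl a) * X (Sum.inl b) * X (Sum.inl c) * X (Sum.inl c) from
          (monomial_eq_prod4 _ _ _ _).symm,
      show (monomial (xe a + xe b + ye c + ye c) (1:k)) =
        X (Sum.inl a) * X (Sum.inl b) * X (Sum.inr c) * X (Sum.inr c) from
          (monomial_eq_prod4 _ _ _ _).symm]
    ring
  rw [hEq]
  exact Ideal.sub_mem _
    (Ideal.add_mem _ (Ideal.mul_mem_left _ _ (gen_mem a c hac))
      (Ideal.mul_mem_left _ _ (gen_mem b c hbc)))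
    (Ideal.mul_mem_left _ _ (gen_mem a b hab))

lemma sq_le_w {e w : σ3 →₀ ℕ} (v : σ3) (hwv : w v = 1) (hsq : ∀ s, e s ≤ 1)
    (hle : e ≤ w + Finsupp.single v 1) : e ≤ w := by
  rw [Finsupp.le_def]
  intro s
  have h := Finsupp.le_def.mp hle s
  rcases eq_or_ne s v with rfl | hsv
  · rw [hwv]; exact hsq s
  · rwa [Finsupp.add_apply, Finsupp.single_apply, if_neg (Ne.symm hsv), add_zero] at h

/-- The main case tree, given the ratio ordering `i ≻ j ≻ l`. -/
lemma tree (i j l : Fin 3) (hij : i ≠ j) (hil : i ≠ l) (hjl : j ≠ l)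
    (hRij : m.toSyn (xe j + ye i) < m.toSyn (xe i + ye j))
    (hRil : m.toSyn (xe l + ye i) < m.toSyn (xe i + ye l))
    (hRjl : m.toSyn (xe l + ye j) < m.toSyn (xe j + ye l))
    (hyp : ∃ S : Set (MvPolynomial (Fin 3 ⊕ Fin 3) k),
        (∀ g ∈ S, ∃ d : (Fin 3 ⊕ Fin 3) →₀ ℕ,
          (∀ s, d s ≤ 1) ∧ g = monomial d (1 : k)) ∧
        initialIdeal m (pbei k (⊤ : SimpleGraph (Fin 3))) = Ideal.span S) : False := by
  by_cases hPij : m.toSyn (ye i + ye j) < m.toSyn (xe i + xe j)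
  · by_cases hZl : m.toSyn (ye l) < m.toSyn (xe l)
    · -- branch C with t = l
      obtain ⟨F, hFI, hF0, hdeg⟩ := witness1 (k := k) m i j l hij hil hjl hZl
      obtain ⟨f, hfI, hf0, hsq, hle⟩ := key_reduction m hyp hFI hF0
      rw [hdeg] at hle
      have hle' : mDeg m f ≤ ye i + ye j + xe l :=
        sq_le_w (v := Sum.inl l) (by simp [Finsupp.add_apply]) hsq hle
      exact branchC m i j l hij hil hjl hPij hRil hRjl hfI hf0
        (by rwa [show xe l + ye i + ye j = ye i + ye j + xe l from by abel])
    · by_cases hZj : m.toSyn (ye j) < m.toSyn (xe j)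
      · by_cases hPjl : m.toSyn (ye j + ye l) < m.toSyn (xe j + xe l)
        · -- branch A with t = l
          have hZl' : m.toSyn (xe l) < m.toSyn (ye l) := syn_total m (neZ l) hZl
          have hPil : m.toSyn (ye i + ye l) < m.toSyn (xe i + xe l) := by
            have h := add_lt_add hRij hPjl
            rw [← map_add, ← map_add] at h
            rw [show xe j + ye i + (ye j + ye l) = (ye i + ye l) + (xe j + ye j) from by abel,
              show xe i + ye j + (xe j + xe l) = (xe i + xe l) + (xe j + ye j) from by abel] at h
            exact syn_cancel_right_lt m h
          obtain ⟨F, hFI, hF0, hdeg⟩ := witness5 (k := k) m i j l hij hil hjl hZl'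
          obtain ⟨f, hfI, hf0, hsq, hle⟩ := key_reduction m hyp hFI hF0
          rw [hdeg] at hle
          have hle' : mDeg m f ≤ ye i + ye j + ye l :=
            sq_le_w (v := Sum.inr l)
              (by simp [Finsupp.add_apply, hil, hjl]) hsq hle
          exact branchA m i j l hij hil hjl hPij hPil hPjl hfI hf0 hle'
        · -- branch D with t = j
          have hPjl' : m.toSyn (xe j + xe l) < m.toSyn (ye j + ye l) :=
            syn_total m (neP j l) hPjl
          obtain ⟨F, hFI, hF0, hdeg⟩ := witness3 (k := k) m j l i hjl (Ne.symm hij) (Ne.symm hil) hZj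
          obtain ⟨f, hfI, hf0, hsq, hle⟩ := key_reduction m hyp hFI hF0
          rw [hdeg] at hle
          have hle' : mDeg m f ≤ xe j + xe l + ye i :=
            sq_le_w (v := Sum.inl j) (by simp [Finsupp.add_apply, Ne.symm hjl]) hsq hle
          exact branchD m i j l hij hil hjl hPjl' hRij hRil hfI hf0 hle'
      · -- branch C with t = j
        have hZj' : m.toSyn (xe j) < m.toSyn (ye j) := syn_total m (neZ j) hZj
        obtain ⟨F, hFI, hF0, hdeg⟩ :=
          witness2 (k := k) m l i j (Ne.symm hil) (Ne.symm hjl) hij hZj'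
        obtain ⟨f, hfI, hf0, hsq, hle⟩ := key_reduction m hyp hFI hF0
        rw [hdeg] at hle
        have hle' : mDeg m f ≤ xe l + ye i + ye j :=
          sq_le_w (v := Sum.inr j) (by simp [Finsupp.add_apply, hij]) hsq hle
        exact branchC m i j l hij hil hjl hPij hRil hRjl hfI hf0 hle'
  · have hPij' : m.toSyn (xe i + xe j) < m.toSyn (ye i + ye j) :=
      syn_total m (neP i j) hPij
    have hPil' : m.toSyn (xe i + xe l) < m.toSyn (ye i + ye l) := by
      have h := add_lt_add hPij' hRjl
      rw [← map_add, ← map_add] at h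
      rw [show xe i + xe j + (xe l + ye j) = (xe i + xe l) + (xe j + ye j) from by abel,
        show ye i + ye j + (xe j + ye l) = (ye i + ye l) + (xe j + ye j) from by abel] at h
      exact syn_cancel_right_lt m h
    have hPjl' : m.toSyn (xe j + xe l) < m.toSyn (ye j + ye l) := by
      have h := add_lt_add hPij' hRil
      rw [← map_add, ← map_add] at h
      rw [show xe i + xe j + (xe l + ye i) = (xe j + xe l) + (xe i + ye i) from by abel,
        show ye i + ye j + (xe i + ye l) = (ye j + ye l) + (xe i + ye i) from by abel] at h
      exact syn_cancel_right_lt m h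
    by_cases hZi : m.toSyn (ye i) < m.toSyn (xe i)
    · -- branch B with t = i
      obtain ⟨F, hFI, hF0, hdeg⟩ := witness6 (k := k) m j l i hjl (Ne.symm hij) (Ne.symm hil) hZi
      obtain ⟨f, hfI, hf0, hsq, hle⟩ := key_reduction m hyp hFI hF0
      rw [hdeg] at hle
      have hle' : mDeg m f ≤ xe j + xe l + xe i :=
        sq_le_w (v := Sum.inl i)
          (by simp [Finsupp.add_apply, Ne.symm hij, Ne.symm hil]) hsq hle
      exact branchB m i j l hij hil hjl hPij' hPil' hPjl' hfI hf0
        (by rwa [show xe i + xe j + xe l = xe j + xe l + xe i from by abel])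
    · -- branch D with t = i
      have hZi' : m.toSyn (xe i) < m.toSyn (ye i) := syn_total m (neZ i) hZi
      obtain ⟨F, hFI, hF0, hdeg⟩ := witness4 (k := k) m j l i hjl (Ne.symm hij) (Ne.symm hil) hZi'
      obtain ⟨f, hfI, hf0, hsq, hle⟩ := key_reduction m hyp hFI hF0
      rw [hdeg] at hle
      have hle' : mDeg m f ≤ xe j + xe l + ye i :=
        sq_le_w (v := Sum.inr i) (by simp [Finsupp.add_apply]) hsq hle
      exact branchD m i j l hij hil hjl hPjl' hRij hRil hfI hf0 hle'

end PBaux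

open PBaux in
/-- The parity binomial edge ideal of the triangle `K₃` has no square-free
initial ideal with respect to any monomial order, over any field. -/
theorem pbei_K3_no_squarefree_initialIdeal
    {k : Type*} [Field k] (m : MonomialOrder (Fin 3 ⊕ Fin 3)) :
    ¬ ∃ S : Set (MvPolynomial (Fin 3 ⊕ Fin 3) k),
        (∀ g ∈ S, ∃ d : (Fin 3 ⊕ Fin 3) →₀ ℕ,
          (∀ s, d s ≤ 1) ∧ g = monomial d (1 : k)) ∧
        initialIdeal m (pbei k (⊤ : SimpleGraph (Fin 3))) = Ideal.span S := by
  intro hyp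
  by_cases h12 : m.toSyn (xe 1 + ye 0) < m.toSyn (xe 0 + ye 1)
  · by_cases h13 : m.toSyn (xe 2 + ye 0) < m.toSyn (xe 0 + ye 2)
    · by_cases h23 : m.toSyn (xe 2 + ye 1) < m.toSyn (xe 1 + ye 2)
      · exact tree m 0 1 2 (by decide) (by decide) (by decide) h12 h13 h23 hyp
      · have h23' := syn_total m (neR 1 2 (by decide)) h23
        exact tree m 0 2 1 (by decide) (by decide) (by decide) h13 h12 h23' hyp
    · have h13' := syn_total m (neR 0 2 (by decide)) h13
      by_cases h23 : m.toSyn (xe 2 + ye 1) < m.toSyn (xe 1 + ye 2)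
      · have h := add_lt_add (add_lt_add h12 h23) h13'
        rw [← map_add, ← map_add, ← map_add, ← map_add] at h
        rw [show xe 1 + ye 0 + (xe 2 + ye 1) + (xe 0 + ye 2)
            = xe 0 + ye 1 + (xe 1 + ye 2) + (xe 2 + ye 0) from by abel] at h
        exact lt_irrefl _ h
      · have h23' := syn_total m (neR 1 2 (by decide)) h23
        exact tree m 2 0 1 (by decide) (by decide) (by decide) h13' h23' h12 hyp
  · have h12' := syn_total m (neR 0 1 (by decide)) h12
    by_cases h13 : m.toSyn (xe 2 + ye 0) < m.toSyn (xe 0 + ye 2)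
    · by_cases h23 : m.toSyn (xe 2 + ye 1) < m.toSyn (xe 1 + ye 2)
      · exact tree m 1 0 2 (by decide) (by decide) (by decide) h12' h23 h13 hyp
      · have h23' := syn_total m (neR 1 2 (by decide)) h23
        have h := add_lt_add (add_lt_add h12' h13) h23'
        rw [← map_add, ← map_add, ← map_add, ← map_add] at h
        rw [show xe 0 + ye 1 + (xe 2 + ye 0) + (xe 1 + ye 2)
            = xe 1 + ye 0 + (xe 0 + ye 2) + (xe 2 + ye 1) from by abel] at h
        exact lt_irrefl _ h
    · have h13' := syn_total m (neR 0 2 (by decide)) h13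
      by_cases h23 : m.toSyn (xe 2 + ye 1) < m.toSyn (xe 1 + ye 2)
      · exact tree m 1 2 0 (by decide) (by decide) (by decide) h23 h12' h13' hyp
      · have h23' := syn_total m (neR 1 2 (by decide)) h23
        exact tree m 2 1 0 (by decide) (by decide) (by decide) h23' h13' h12' hyp
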